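/- arXiv:1612.05814 — 2 statements merged into one kernel-verified Lean document; each statement's English description precedes it below -/
import Mathlib

section
/- (Proposition 3.) An embedded subset (A,P) ∈ ℰ^N is a modular element of the geometric lattice ℰ^N (i.e., r(A,P) + r(B,Q) = r((A,P) ∨ (B,Q)) + r((A,P) ∧ (B,Q)) for all (B,Q) ∈ ℰ^N) if and only if P is a modular partition (P = P_⊥ or P = P^C_⊥ for some C ⊆ N with |C| > 1) and either A = ∅, or else P ≠ P_⊥ and A is the non-singleton block of P. Consequently ℰ^N has exactly 2^{n+1} − (n+1) modular elements. -/
open scoped BigOperators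

/-- `modp n A` is the modular partition `P^A_⊥` of `Fin n` whose unique (possibly)
non-singleton block is `A`, all other blocks being singletons. -/
def modp (n : ℕ) (A : Set (Fin n)) : Setoid (Fin n) where
  r x y := x = y ∨ (x ∈ A ∧ y ∈ A)
  iseqv := by
    refine ⟨fun _ => Or.inl rfl, ?_, ?_⟩
    · rintro x y (rfl | ⟨hx, hy⟩)
      · exact Or.inl rfl
      · exact Or.inr ⟨hy, hx⟩
    · rintro x y z (rfl | ⟨hx, hy⟩) h
      · exact h
      · rcases h with rfl | ⟨hy', hz⟩
        · exact Or.inr ⟨hx, hy⟩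
        · exact Or.inr ⟨hx, hz⟩

/-- The product `X^N = 2^N × 𝒫^N` of the subset lattice and the partition lattice,
ordered componentwise. -/
abbrev XN (n : ℕ) := Set (Fin n) × Setoid (Fin n)

/-- The closure operator `cl` on `X^N`:  `cl(∅,P) = (∅,P)` and, for `A ≠ ∅`,
`cl(A,P) = (Ā, P ⊔ P^A_⊥)` where `Ā` is the block of `P ⊔ P^A_⊥` containing `A`. -/
def EmbClosure (n : ℕ) (x : XN n) : XN n :=
  ({y | ∃ a ∈ x.1, (x.2 ⊔ modp n x.1) y a}, x.2 ⊔ modp n x.1)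

/-- An embedded subset is a pair that coincides with its closure. -/
def IsEmbedded (n : ℕ) (x : XN n) : Prop := EmbClosure n x = x

/-- The lattice `ℰ^N` of embedded subsets, with the induced order. -/
abbrev Emb (n : ℕ) := {x : XN n // IsEmbedded n x}

lemma modp_le_of_subsingleton {n : ℕ} {A : Set (Fin n)} (h : A.Subsingleton)
    (Q : Setoid (Fin n)) : modp n A ≤ Q := by
  rw [Setoid.le_def]
  intro x y hxy
  rcases hxy with rfl | ⟨hx, hy⟩
  · exact Q.refl' x
  · obtain rfl := h hx hy
    exact Q.refl' x

lemma modp_eq_bot_of_subsingleton {n : ℕ} {A : Set (Fin n)} (h : A.Subsingleton) :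
    modp n A = ⊥ :=
  le_antisymm (modp_le_of_subsingleton h ⊥) bot_le

lemma embedded_empty (n : ℕ) (Q : Setoid (Fin n)) : IsEmbedded n (∅, Q) := by
  unfold IsEmbedded EmbClosure
  refine Prod.ext ?_ ?_
  · simp
  · simpa using sup_eq_left.mpr (modp_le_of_subsingleton Set.subsingleton_empty Q)

lemma embedded_univ_top (n : ℕ) : IsEmbedded n (Set.univ, ⊤) := by
  unfold IsEmbedded EmbClosure
  refine Prod.ext ?_ ?_
  · ext y
    simp only [Set.mem_setOf_eq, Set.mem_univ, iff_true]
    exact ⟨y, trivial, Setoid.refl' _ y⟩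
  · exact sup_eq_left.mpr le_top

lemma embedded_singleton (n : ℕ) (i : Fin n) : IsEmbedded n ({i}, ⊥) := by
  have hb : modp n ({i} : Set (Fin n)) = ⊥ :=
    modp_eq_bot_of_subsingleton Set.subsingleton_singleton
  unfold IsEmbedded EmbClosure
  refine Prod.ext ?_ ?_
  · ext y
    simp only [Set.mem_setOf_eq, hb, sup_idem, Set.mem_singleton_iff]
    constructor
    · rintro ⟨a, ha, hrel⟩
      subst ha
      change (⊥ ⊔ modp n {a}) y a at hrel
      rw [hb, sup_idem] at hrel
      simpa [Setoid.bot_def] using hrel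
    · rintro rfl
      exact ⟨y, rfl, Setoid.refl' _ y⟩
  · simp [hb]

/-- The bottom element `(∅, P_⊥)` of `ℰ^N`. -/
def botE (n : ℕ) : Emb n := ⟨(∅, ⊥), embedded_empty n ⊥⟩

/-- The top element `(N, P^⊤)` of `ℰ^N`. -/
def topE (n : ℕ) : Emb n := ⟨(Set.univ, ⊤), embedded_univ_top n⟩

/-- The atom `({i}, P_⊥)` of `ℰ^N`. -/
def atomS (n : ℕ) (i : Fin n) : Emb n := ⟨({i}, ⊥), embedded_singleton n i⟩

/-- The atom `(∅, [ij])` of `ℰ^N`, where `[ij]` is the atom of the partition lattice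
whose unique non-singleton block is the pair `{i, j}`. -/
def atomP (n : ℕ) (i j : Fin n) : Emb n := ⟨(∅, modp n {i, j}), embedded_empty n _⟩

/-- A pair is an atom candidate: of the form `({i},P_⊥)` or `(∅,[ij])` with `i ≠ j`. -/
def IsAtomPair (n : ℕ) (a : XN n) : Prop :=
  (∃ i : Fin n, a = ({i}, ⊥)) ∨ ∃ i j : Fin n, i ≠ j ∧ a = (∅, modp n {i, j})

/-- The number of blocks `|P|` of a partition. -/
noncomputable def numBlocks {α : Type*} (P : Setoid α) : ℕ := P.classes.ncard

/-- The rank function `r(A,P) = (n − |P|) + min{|A|,1}` of `ℰ^N`. -/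
noncomputable def erank (n : ℕ) (x : XN n) : ℕ := (n - numBlocks x.2) + min x.1.ncard 1

/-- The partition `Q^S` of `S` induced by a partition `Q` of `N`. -/
def indPart {n : ℕ} (S : Set (Fin n)) (Q : Setoid (Fin n)) : Setoid S :=
  Setoid.comap Subtype.val Q

/-- `mu` is the Möbius function of the (finite) poset `α`. -/
def IsMobius {α : Type*} [PartialOrder α] (mu : α → α → ℤ) : Prop :=
  (∀ x, mu x x = 1) ∧
  (∀ x y, ¬x ≤ y → mu x y = 0) ∧
  (∀ x y, x < y → mu x y = -∑ᶠ z ∈ Set.Ico x y, mu x z)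

set_option linter.unusedVariables false

section aux
variable {n : ℕ}

lemma modp_rel {C : Set (Fin n)} {x y : Fin n} :
    (modp n C) x y ↔ x = y ∨ (x ∈ C ∧ y ∈ C) := Iff.rfl

def cls (Q : Setoid (Fin n)) (a : Fin n) : Set (Fin n) := {z | Q z a}

lemma mem_cls {Q : Setoid (Fin n)} {z a : Fin n} : z ∈ cls Q a ↔ Q z a := Iff.rfl

lemma cls_mem_classes (Q : Setoid (Fin n)) (a : Fin n) : cls Q a ∈ Q.classes :=
  Q.mem_classes a

lemma mem_cls_self (Q : Setoid (Fin n)) (a : Fin n) : a ∈ cls Q a := Q.refl' a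

lemma cls_eq_cls {Q : Setoid (Fin n)} {a b : Fin n} (h : Q a b) : cls Q a = cls Q b :=
  Set.ext fun z => ⟨fun hz => Q.trans' hz h, fun hz => Q.trans' hz (Q.symm' h)⟩

lemma cls_eq_iff {Q : Setoid (Fin n)} {a b : Fin n} : cls Q a = cls Q b ↔ Q a b := by
  refine ⟨fun h => ?_, cls_eq_cls⟩
  have := mem_cls_self Q a
  rw [h] at this
  exact this

lemma classes_rep {Q : Setoid (Fin n)} {D : Set (Fin n)} (hD : D ∈ Q.classes) :
    ∀ a ∈ D, D = cls Q a := by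
  obtain ⟨y, rfl⟩ := hD
  intro a ha
  exact cls_eq_cls (Q.symm' ha)

/-- the union of the `Q`-classes meeting `C` -/
def mergeSet (C : Set (Fin n)) (Q : Setoid (Fin n)) : Set (Fin n) :=
  {z | ∃ c ∈ C, Q z c}

lemma mergeSet_qclosed {C : Set (Fin n)} {Q : Setoid (Fin n)} {x y : Fin n}
    (h : Q x y) (hy : y ∈ mergeSet C Q) : x ∈ mergeSet C Q := by
  obtain ⟨c, hc, hqc⟩ := hy
  exact ⟨c, hc, Q.trans' h hqc⟩

lemma subset_mergeSet (C : Set (Fin n)) (Q : Setoid (Fin n)) : C ⊆ mergeSet C Q :=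
  fun c hc => ⟨c, hc, Q.refl' c⟩

/-- the partition obtained from `Q` by merging all classes meeting `C` -/
def mergeC (C : Set (Fin n)) (Q : Setoid (Fin n)) : Setoid (Fin n) where
  r x y := Q x y ∨ (x ∈ mergeSet C Q ∧ y ∈ mergeSet C Q)
  iseqv := by
    refine ⟨fun x => Or.inl (Q.refl' x), ?_, ?_⟩
    · rintro x y (h | ⟨hx, hy⟩)
      · exact Or.inl (Q.symm' h)
      · exact Or.inr ⟨hy, hx⟩
    · rintro x y z (h | ⟨hx, hy⟩) (h' | ⟨hy', hz⟩)
      · exact Or.inl (Q.trans' h h')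
      · exact Or.inr ⟨mergeSet_qclosed h hy', hz⟩
      · exact Or.inr ⟨hx, mergeSet_qclosed (Q.symm' h') hy⟩
      · exact Or.inr ⟨hx, hz⟩

lemma mergeC_rel {C : Set (Fin n)} {Q : Setoid (Fin n)} {x y : Fin n} :
    (mergeC C Q) x y ↔ Q x y ∨ (x ∈ mergeSet C Q ∧ y ∈ mergeSet C Q) := Iff.rfl

lemma sup_modp_eq_mergeC (Q : Setoid (Fin n)) (C : Set (Fin n)) :
    Q ⊔ modp n C = mergeC C Q := by
  apply le_antisymm
  · refine sup_le ?_ ?_ <;> rw [Setoid.le_def]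
    · intro x y h; exact Or.inl h
    · rintro x y (rfl | ⟨hx, hy⟩)
      · exact Or.inl (Q.refl' x)
      · exact Or.inr ⟨subset_mergeSet C Q hx, subset_mergeSet C Q hy⟩
  · rw [Setoid.le_def]
    have hQ : Q ≤ Q ⊔ modp n C := le_sup_left
    have hm : modp n C ≤ Q ⊔ modp n C := le_sup_right
    rw [Setoid.le_def] at hQ hm
    rintro x y (h | ⟨⟨c, hc, hxc⟩, ⟨c', hc', hyc'⟩⟩)
    · exact hQ h
    · have h1 : (Q ⊔ modp n C) x c := hQ hxc
      have h2 : (Q ⊔ modp n C) c c' := hm (Or.inr ⟨hc, hc'⟩)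
      have h3 : (Q ⊔ modp n C) c' y := (Q ⊔ modp n C).symm' (hQ hyc')
      exact (Q ⊔ modp n C).trans' ((Q ⊔ modp n C).trans' h1 h2) h3

lemma cls_mergeC_of_mem {C : Set (Fin n)} {Q : Setoid (Fin n)} {a : Fin n}
    (ha : a ∈ mergeSet C Q) : cls (mergeC C Q) a = mergeSet C Q := by
  ext z
  rw [mem_cls, mergeC_rel]
  constructor
  · rintro (h | ⟨hz, _⟩)
    · exact mergeSet_qclosed h ha
    · exact hz
  · intro hz; exact Or.inr ⟨hz, ha⟩

lemma cls_mergeC_of_not_mem {C : Set (Fin n)} {Q : Setoid (Fin n)} {a : Fin n}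
    (ha : a ∉ mergeSet C Q) : cls (mergeC C Q) a = cls Q a := by
  ext z
  rw [mem_cls, mergeC_rel, mem_cls]
  constructor
  · rintro (h | ⟨_, hza⟩)
    · exact h
    · exact absurd hza ha
  · exact Or.inl

lemma classes_mergeC {C : Set (Fin n)} {Q : Setoid (Fin n)} (hC : C.Nonempty) :
    (mergeC C Q).classes = insert (mergeSet C Q) (Q.classes \ (cls Q '' C)) := by
  ext D
  constructor
  · rintro ⟨y, rfl⟩
    by_cases hy : y ∈ mergeSet C Q
    · left
      exact (cls_mergeC_of_mem hy).symm ▸ (cls_mergeC_of_mem hy)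
    · right
      have h1 : cls (mergeC C Q) y = cls Q y := cls_mergeC_of_not_mem hy
      show {x | (mergeC C Q) x y} ∈ _
      have : {x | (mergeC C Q) x y} = cls Q y := h1
      rw [this]
      refine ⟨cls_mem_classes Q y, ?_⟩
      rintro ⟨c, hc, hcy⟩
      have hyc : y ∈ cls Q c := by
        rw [hcy]; exact mem_cls_self Q y
      exact hy ⟨c, hc, hyc⟩
  · rintro (rfl | ⟨⟨y, rfl⟩, hD⟩)
    · obtain ⟨c, hc⟩ := hC
      have : mergeSet C Q = cls (mergeC C Q) c := (cls_mergeC_of_mem (subset_mergeSet C Q hc)).symm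
      rw [this]
      exact cls_mem_classes _ c
    · have hy : y ∉ mergeSet C Q := by
        rintro ⟨c, hc, hyc⟩
        exact hD ⟨c, hc, (cls_eq_cls (Q.symm' hyc))⟩
      have : {x | Q x y} = cls (mergeC C Q) y := (cls_mergeC_of_not_mem hy).symm
      rw [this]
      exact cls_mem_classes _ y

lemma cls_image_subset_classes (Q : Setoid (Fin n)) (C : Set (Fin n)) :
    cls Q '' C ⊆ Q.classes := by
  rintro _ ⟨c, hc, rfl⟩
  exact cls_mem_classes Q c

lemma numBlocks_mergeC {C : Set (Fin n)} {Q : Setoid (Fin n)} (hC : C.Nonempty) :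
    numBlocks (mergeC C Q) + (cls Q '' C).ncard = numBlocks Q + 1 := by
  have himg := cls_image_subset_classes Q C
  have hnot : mergeSet C Q ∉ Q.classes \ (cls Q '' C) := by
    rintro ⟨hmem, hnim⟩
    obtain ⟨c, hc⟩ := hC
    exact hnim ⟨c, hc, (classes_rep hmem c (subset_mergeSet C Q hc)).symm⟩
  have hle : (cls Q '' C).ncard ≤ Q.classes.ncard := Set.ncard_le_ncard himg (Set.toFinite _)
  rw [numBlocks, numBlocks, classes_mergeC hC, Set.ncard_insert_of_notMem hnot,
    Set.ncard_diff himg]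
  omega

lemma numBlocks_eq_card_quot (Q : Setoid (Fin n)) :
    numBlocks Q = Nat.card (Quotient Q) := by
  rw [numBlocks, ← Nat.card_coe_set_eq]
  exact (Nat.card_congr (Setoid.quotientEquivClasses Q)).symm

lemma numBlocks_le (Q : Setoid (Fin n)) : numBlocks Q ≤ n := by
  rw [numBlocks_eq_card_quot]
  have := Nat.card_le_card_of_surjective (Quotient.mk Q) (Quotient.mk_surjective)
  simpa using this

lemma numBlocks_pos (hn : 1 ≤ n) (Q : Setoid (Fin n)) : 1 ≤ numBlocks Q := by
  rw [numBlocks_eq_card_quot]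
  have : Nonempty (Fin n) := ⟨⟨0, hn⟩⟩
  have : Nonempty (Quotient Q) := Nonempty.map (Quotient.mk Q) this
  exact Nat.card_pos

lemma cls_bot (a : Fin n) : cls (⊥ : Setoid (Fin n)) a = {a} := by
  ext z
  rw [mem_cls]
  simp [Setoid.bot_def]

lemma numBlocks_bot : numBlocks (⊥ : Setoid (Fin n)) = n := by
  rw [numBlocks]
  have : (⊥ : Setoid (Fin n)).classes = (fun a : Fin n => ({a} : Set (Fin n))) '' Set.univ := by
    ext D
    constructor
    · rintro ⟨y, rfl⟩
      exact ⟨y, trivial, (cls_bot y).symm⟩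
    · rintro ⟨a, -, rfl⟩
      have := cls_mem_classes (⊥ : Setoid (Fin n)) a
      rwa [cls_bot] at this
  rw [this, Set.ncard_image_of_injective _ (fun a b h => by simpa using h), Set.ncard_univ]
  simp

lemma cls_modp_of_mem {C : Set (Fin n)} {a : Fin n} (ha : a ∈ C) :
    cls (modp n C) a = C := by
  ext z
  rw [mem_cls, modp_rel]
  constructor
  · rintro (rfl | ⟨hz, -⟩)
    · exact ha
    · exact hz
  · intro hz; exact Or.inr ⟨hz, ha⟩

lemma cls_modp_of_not_mem {C : Set (Fin n)} {a : Fin n} (ha : a ∉ C) :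
    cls (modp n C) a = {a} := by
  ext z
  rw [mem_cls, modp_rel]
  constructor
  · rintro (rfl | ⟨-, h⟩)
    · rfl
    · exact absurd h ha
  · rintro rfl; exact Or.inl rfl

lemma mergeC_bot (C : Set (Fin n)) : mergeC C ⊥ = modp n C := by
  apply Setoid.ext
  intro x y
  rw [mergeC_rel, modp_rel]
  have hms : mergeSet C (⊥ : Setoid (Fin n)) = C := by
    ext z
    constructor
    · rintro ⟨c, hc, h⟩
      have : z = c := h
      rwa [this]
    · intro hz; exact ⟨z, hz, Setoid.refl' _ z⟩
  rw [hms, Setoid.bot_def]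

lemma numBlocks_modp {C : Set (Fin n)} (hC : C.Nonempty) :
    numBlocks (modp n C) + C.ncard = n + 1 := by
  have h := numBlocks_mergeC (Q := (⊥ : Setoid (Fin n))) hC
  rw [mergeC_bot] at h
  have himg : (cls (⊥ : Setoid (Fin n)) '' C).ncard = C.ncard := by
    have : ∀ a ∈ C, cls (⊥ : Setoid (Fin n)) a = ({a} : Set (Fin n)) := fun a _ => cls_bot a
    rw [Set.ncard_image_of_injOn]
    intro a ha b hb hab
    rw [cls_bot, cls_bot] at hab
    simpa using hab
  rw [himg, numBlocks_bot] at h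
  omega

lemma inf_modp_rel {C : Set (Fin n)} {Q : Setoid (Fin n)} {x y : Fin n} :
    (modp n C ⊓ Q) x y ↔ (x = y ∨ (x ∈ C ∧ y ∈ C)) ∧ Q x y := by
  rw [show ((modp n C ⊓ Q) x y ↔ (modp n C) x y ∧ Q x y) from Setoid.inf_iff_and, modp_rel]

lemma cls_inf_modp_of_mem {C : Set (Fin n)} {Q : Setoid (Fin n)} {a : Fin n} (ha : a ∈ C) :
    cls (modp n C ⊓ Q) a = C ∩ cls Q a := by
  ext z
  rw [mem_cls, inf_modp_rel]
  constructor
  · rintro ⟨rfl | ⟨hz, -⟩, hq⟩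
    · exact ⟨ha, hq⟩
    · exact ⟨hz, hq⟩
  · rintro ⟨hz, hq⟩
    exact ⟨Or.inr ⟨hz, ha⟩, hq⟩

lemma cls_inf_modp_of_not_mem {C : Set (Fin n)} {Q : Setoid (Fin n)} {a : Fin n} (ha : a ∉ C) :
    cls (modp n C ⊓ Q) a = {a} := by
  ext z
  rw [mem_cls, inf_modp_rel]
  constructor
  · rintro ⟨rfl | ⟨-, h⟩, -⟩
    · rfl
    · exact absurd h ha
  · rintro rfl
    exact ⟨Or.inl rfl, Q.refl' z⟩

lemma classes_inf_modp (C : Set (Fin n)) (Q : Setoid (Fin n)) :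
    (modp n C ⊓ Q).classes =
      ((fun D => C ∩ D) '' (cls Q '' C)) ∪ ((fun a => ({a} : Set (Fin n))) '' Cᶜ) := by
  ext D
  constructor
  · rintro ⟨y, rfl⟩
    by_cases hy : y ∈ C
    · left
      exact ⟨cls Q y, ⟨y, hy, rfl⟩, (cls_inf_modp_of_mem hy).symm⟩
    · right
      exact ⟨y, hy, (cls_inf_modp_of_not_mem hy).symm⟩
  · rintro (⟨E, ⟨a, ha, rfl⟩, rfl⟩ | ⟨a, ha, rfl⟩)
    · have := cls_mem_classes (modp n C ⊓ Q) a
      rwa [cls_inf_modp_of_mem ha] at this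
    · have := cls_mem_classes (modp n C ⊓ Q) a
      rwa [cls_inf_modp_of_not_mem ha] at this

lemma card_fin' : Nat.card (Fin n) = n := by
  simp

lemma numBlocks_inf_modp (C : Set (Fin n)) (Q : Setoid (Fin n)) :
    numBlocks (modp n C ⊓ Q) + C.ncard = n + (cls Q '' C).ncard := by
  rw [numBlocks, classes_inf_modp]
  have hdisj : Disjoint ((fun D => C ∩ D) '' (cls Q '' C))
      ((fun a => ({a} : Set (Fin n))) '' Cᶜ) := by
    rw [Set.disjoint_left]
    rintro E ⟨F, ⟨a, ha, rfl⟩, rfl⟩ ⟨b, hb, hEb⟩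
    have haE : a ∈ C ∩ cls Q a := ⟨ha, mem_cls_self Q a⟩
    simp only at hEb
    rw [← hEb] at haE
    obtain rfl : a = b := haE
    exact hb ha
  rw [Set.ncard_union_eq hdisj (Set.toFinite _) (Set.toFinite _)]
  have h1 : ((fun D => C ∩ D) '' (cls Q '' C)).ncard = (cls Q '' C).ncard := by
    apply Set.ncard_image_of_injOn
    rintro _ ⟨a, ha, rfl⟩ _ ⟨b, hb, rfl⟩ hab
    have haa : a ∈ C ∩ cls Q a := ⟨ha, mem_cls_self Q a⟩
    simp only at hab
    rw [hab] at haa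
    exact cls_eq_cls haa.2
  have h2 : ((fun a => ({a} : Set (Fin n))) '' Cᶜ).ncard = Cᶜ.ncard :=
    Set.ncard_image_of_injective _ (fun a b h => by simpa using h)
  have h3 : C.ncard + Cᶜ.ncard = n := by
    rw [Set.ncard_add_ncard_compl, card_fin']
  omega

lemma modp_inf_modp (C D : Set (Fin n)) : modp n C ⊓ modp n D = modp n (C ∩ D) := by
  apply Setoid.ext
  intro x y
  rw [Setoid.inf_iff_and, modp_rel, modp_rel, modp_rel]
  constructor
  · rintro ⟨rfl | ⟨h1, h2⟩, h⟩
    · exact Or.inl rfl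
    · rcases h with rfl | ⟨h3, h4⟩
      · exact Or.inl rfl
      · exact Or.inr ⟨⟨h1, h3⟩, ⟨h2, h4⟩⟩
  · rintro (rfl | ⟨⟨h1, h3⟩, h2, h4⟩)
    · exact ⟨Or.inl rfl, Or.inl rfl⟩
    · exact ⟨Or.inr ⟨h1, h2⟩, Or.inr ⟨h3, h4⟩⟩

lemma k_le_card {C : Set (Fin n)} (Q : Setoid (Fin n)) : (cls Q '' C).ncard ≤ C.ncard :=
  Set.ncard_image_le (Set.toFinite _)

lemma k_pos {C : Set (Fin n)} (Q : Setoid (Fin n)) (hC : C.Nonempty) :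
    1 ≤ (cls Q '' C).ncard :=
  (Set.ncard_pos (Set.toFinite _)).mpr (hC.image _)

end aux


lemma modp_mono {C D : Set (Fin n)} (h : C ⊆ D) : modp n C ≤ modp n D := by
  rw [Setoid.le_def]
  rintro x y (rfl | ⟨hx, hy⟩)
  · exact Or.inl rfl
  · exact Or.inr ⟨h hx, h hy⟩

lemma embedded_parts {B : Set (Fin n)} {Q : Setoid (Fin n)} (h : IsEmbedded n (B, Q)) :
    modp n B ≤ Q ∧ ∀ b ∈ B, cls Q b = B := by
  unfold IsEmbedded EmbClosure at h
  have h2 : Q ⊔ modp n B = Q := congrArg Prod.snd h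
  have h1 : {y | ∃ a ∈ B, (Q ⊔ modp n B) y a} = B := congrArg Prod.fst h
  rw [h2] at h1
  have hmod : modp n B ≤ Q := sup_eq_left.mp h2
  refine ⟨hmod, fun b hb => ?_⟩
  ext z
  constructor
  · intro hz
    rw [← h1]
    exact ⟨b, hb, hz⟩
  · intro hz
    have := hmod (show (modp n B) z b from Or.inr ⟨hz, hb⟩)
    exact this

lemma isEmbedded_cls (Q : Setoid (Fin n)) (a : Fin n) : IsEmbedded n (cls Q a, Q) := by
  have hmod : modp n (cls Q a) ≤ Q := by
    rw [Setoid.le_def]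
    rintro x y (rfl | ⟨hx, hy⟩)
    · exact Q.refl' x
    · exact Q.trans' hx (Q.symm' hy)
  have h2 : Q ⊔ modp n (cls Q a) = Q := sup_eq_left.mpr hmod
  unfold IsEmbedded EmbClosure
  refine Prod.ext ?_ ?_
  · show {y | ∃ b ∈ cls Q a, (Q ⊔ modp n (cls Q a)) y b} = cls Q a
    rw [h2]
    ext z
    constructor
    · rintro ⟨b, hb, hzb⟩
      exact Q.trans' hzb hb
    · intro hz
      exact ⟨a, mem_cls_self Q a, hz⟩
  · exact h2

lemma min_ncard_of_nonempty {S : Set (Fin n)} (h : S.Nonempty) : min S.ncard 1 = 1 :=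
  le_antisymm (min_le_right _ _) (le_min ((Set.ncard_pos (Set.toFinite _)).mpr h) le_rfl)

lemma erank_def (x : XN n) : erank n x = (n - numBlocks x.2) + min x.1.ncard 1 := rfl


def IsModularElem (n : ℕ) (x : Emb n) : Prop :=
  ∀ y : Emb n, erank n x.val + erank n y.val =
    erank n (EmbClosure n (x.val ⊔ y.val)) + erank n (x.val ⊓ y.val)


lemma isModular_bot' {n : ℕ} (x : Emb n) (hx : x.val = (∅, ⊥)) : IsModularElem n x := by
  intro y
  obtain ⟨⟨B, Q⟩, hy⟩ := y
  rw [hx]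
  have hsup : ((∅ : Set (Fin n)), (⊥ : Setoid (Fin n))) ⊔ (B, Q) = (B, Q) := by
    rw [Prod.sup_def]
    simp
  have hinf : ((∅ : Set (Fin n)), (⊥ : Setoid (Fin n))) ⊓ (B, Q) = (∅, ⊥) := by
    rw [Prod.inf_def]
    simp
  show erank n (∅, ⊥) + erank n (B, Q) =
    erank n (EmbClosure n (((∅ : Set (Fin n)), (⊥ : Setoid (Fin n))) ⊔ (B, Q))) +
      erank n (((∅ : Set (Fin n)), (⊥ : Setoid (Fin n))) ⊓ (B, Q))
  rw [hsup, hinf, hy, add_comm]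

lemma isModular_empty' {n : ℕ} (hn : 1 ≤ n) (C : Set (Fin n)) (hC : C.Nonempty)
    (x : Emb n) (hx : x.val = (∅, modp n C)) : IsModularElem n x := by
  intro y
  obtain ⟨⟨B, Q⟩, hy⟩ := y
  obtain ⟨hmod, hcls⟩ := embedded_parts hy
  rw [hx]
  show erank n (∅, modp n C) + erank n (B, Q) =
    erank n (EmbClosure n (((∅ : Set (Fin n)), modp n C) ⊔ (B, Q))) +
      erank n (((∅ : Set (Fin n)), modp n C) ⊓ (B, Q))
  have hsup : ((∅ : Set (Fin n)), modp n C) ⊔ (B, Q) = (B, modp n C ⊔ Q) := by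
    rw [Prod.sup_def]
    simp
  have hinf : ((∅ : Set (Fin n)), modp n C) ⊓ (B, Q) = (∅, modp n C ⊓ Q) := by
    rw [Prod.inf_def]
    simp
  have hS : (modp n C ⊔ Q) ⊔ modp n B = mergeC C Q := by
    rw [sup_eq_left.mpr (le_trans hmod (le_sup_right : Q ≤ modp n C ⊔ Q)),
      sup_comm (modp n C) Q, sup_modp_eq_mergeC]
  have hjoin : EmbClosure n (((∅ : Set (Fin n)), modp n C) ⊔ (B, Q)) =
      ({z | ∃ a ∈ B, (mergeC C Q) z a}, mergeC C Q) := by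
    rw [hsup]
    unfold EmbClosure
    rw [show ((B, modp n C ⊔ Q) : XN n).2 ⊔ modp n ((B, modp n C ⊔ Q) : XN n).1
        = mergeC C Q from hS]
  rw [hjoin, hinf]
  rw [erank_def, erank_def, erank_def, erank_def]
  simp only
  have h1 := numBlocks_modp hC
  have h2 := numBlocks_mergeC (Q := Q) hC
  have h3 := numBlocks_inf_modp C Q
  have hb1 := numBlocks_le Q
  have hb2 := numBlocks_le (mergeC C Q)
  have hb3 := numBlocks_le (modp n C ⊓ Q)
  have hb4 := numBlocks_le (modp n C)
  have hk1 := k_le_card (C := C) Q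
  have hk2 := k_pos (C := C) Q hC
  have hcn : C.ncard ≤ n := by
    have := Set.ncard_le_ncard (Set.subset_univ C) (Set.toFinite _)
    rwa [Set.ncard_univ, card_fin'] at this
  have hemp : min (∅ : Set (Fin n)).ncard 1 = 0 := by simp
  rw [hemp]
  rcases B.eq_empty_or_nonempty with rfl | hB
  · have hT : {z | ∃ a ∈ (∅ : Set (Fin n)), (mergeC C Q) z a} = ∅ := by simp
    rw [hT, hemp]
    omega
  · have hT : ({z | ∃ a ∈ B, (mergeC C Q) z a} : Set (Fin n)).Nonempty := by
      obtain ⟨b, hb⟩ := hB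
      exact ⟨b, b, hb, Setoid.refl' _ b⟩
    rw [min_ncard_of_nonempty hB, min_ncard_of_nonempty hT]
    omega

lemma isModular_full' {n : ℕ} (hn : 1 ≤ n) (C : Set (Fin n)) (hC : C.Nonempty)
    (x : Emb n) (hx : x.val = (C, modp n C)) : IsModularElem n x := by
  intro y
  obtain ⟨⟨B, Q⟩, hy⟩ := y
  obtain ⟨hmod, hcls⟩ := embedded_parts hy
  rw [hx]
  show erank n (C, modp n C) + erank n (B, Q) =
    erank n (EmbClosure n ((C, modp n C) ⊔ (B, Q))) +
      erank n ((C, modp n C) ⊓ (B, Q))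
  have hsup : ((C : Set (Fin n)), modp n C) ⊔ (B, Q) = (C ∪ B, modp n C ⊔ Q) := by
    rw [Prod.sup_def]
    simp
  have hinf : ((C : Set (Fin n)), modp n C) ⊓ (B, Q) = (C ∩ B, modp n C ⊓ Q) := by
    rw [Prod.inf_def]
    simp
  have hS : (modp n C ⊔ Q) ⊔ modp n (C ∪ B) = mergeC (C ∪ B) Q := by
    rw [sup_comm (modp n C) Q, sup_assoc,
      sup_eq_right.mpr (modp_mono Set.subset_union_left), sup_modp_eq_mergeC]
  have hjoin : EmbClosure n (((C : Set (Fin n)), modp n C) ⊔ (B, Q)) =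
      ({z | ∃ a ∈ C ∪ B, (mergeC (C ∪ B) Q) z a}, mergeC (C ∪ B) Q) := by
    rw [hsup]
    unfold EmbClosure
    rw [show ((C ∪ B, modp n C ⊔ Q) : XN n).2 ⊔ modp n ((C ∪ B, modp n C ⊔ Q) : XN n).1
        = mergeC (C ∪ B) Q from hS]
  rw [hjoin, hinf]
  rw [erank_def, erank_def, erank_def, erank_def]
  simp only
  have hT : ({z | ∃ a ∈ C ∪ B, (mergeC (C ∪ B) Q) z a} : Set (Fin n)).Nonempty := by
    obtain ⟨c, hc⟩ := hC
    exact ⟨c, c, Or.inl hc, Setoid.refl' _ c⟩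
  have h1 := numBlocks_modp hC
  have h2 := numBlocks_mergeC (Q := Q) (hC.inl (t := B))
  have h3 := numBlocks_inf_modp C Q
  have hb1 := numBlocks_le Q
  have hb2 := numBlocks_le (mergeC (C ∪ B) Q)
  have hb3 := numBlocks_le (modp n C ⊓ Q)
  have hb4 := numBlocks_le (modp n C)
  have hk1 := k_le_card (C := C) Q
  have hk2 := k_pos (C := C) Q hC
  have hcn : C.ncard ≤ n := by
    have := Set.ncard_le_ncard (Set.subset_univ C) (Set.toFinite _)
    rwa [Set.ncard_univ, card_fin'] at this
  have himg : cls Q '' (C ∪ B) = cls Q '' C ∪ cls Q '' B := Set.image_union _ _ _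
  rw [min_ncard_of_nonempty hC, min_ncard_of_nonempty hT]
  rcases B.eq_empty_or_nonempty with rfl | hB
  · have hk' : cls Q '' (C ∪ (∅ : Set (Fin n))) = cls Q '' C := by
      rw [Set.union_empty]
    rw [hk'] at h2
    have hmin0 : min (∅ : Set (Fin n)).ncard 1 = 0 := by simp
    rw [Set.inter_empty]
    rw [hmin0]
    omega
  · have himgB : cls Q '' B = {B} := by
      ext E
      constructor
      · rintro ⟨b, hb, rfl⟩
        exact hcls b hb
      · rintro rfl
        obtain ⟨b, hb⟩ := hB
        exact ⟨b, hb, hcls b hb⟩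
    rw [min_ncard_of_nonempty hB]
    rcases (C ∩ B).eq_empty_or_nonempty with hCB | hCB
    · -- B disjoint from C
      have hBnot : B ∉ cls Q '' C := by
        rintro ⟨c, hc, hcB⟩
        have : c ∈ B := by
          rw [← hcB]
          exact mem_cls_self Q c
        exact absurd (Set.mem_inter hc this) (by rw [hCB]; exact fun h => h)
      have hk' : (cls Q '' (C ∪ B)).ncard = (cls Q '' C).ncard + 1 := by
        rw [himg, himgB, Set.union_singleton,
          Set.ncard_insert_of_notMem hBnot (Set.toFinite _)]
      rw [hk'] at h2
      have hmin0 : min (C ∩ B).ncard 1 = 0 := by rw [hCB]; simp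
      rw [hmin0]
      omega
    · -- B meets C
      have hBin : B ∈ cls Q '' C := by
        obtain ⟨d, hdC, hdB⟩ := hCB
        exact ⟨d, hdC, hcls d hdB⟩
      have hk' : cls Q '' (C ∪ B) = cls Q '' C := by
        rw [himg, himgB]
        exact Set.union_eq_self_of_subset_right (Set.singleton_subset_iff.mpr hBin)
      rw [hk'] at h2
      rw [min_ncard_of_nonempty hCB]
      omega



lemma setoid_ne_bot_witness {n : ℕ} {P : Setoid (Fin n)} (h : P ≠ ⊥) :
    ∃ a b, P a b ∧ a ≠ b := by
  by_contra h'
  push_neg at h'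
  apply h
  apply le_antisymm _ bot_le
  rw [Setoid.le_def]
  intro x y hxy
  exact h' x y hxy

lemma ncard_le_n {n : ℕ} (C : Set (Fin n)) : C.ncard ≤ n := by
  have := Set.ncard_le_ncard (Set.subset_univ C) (Set.toFinite _)
  rwa [Set.ncard_univ, card_fin'] at this

lemma not_modular_two_blocks {n : ℕ} (hn : 1 ≤ n) {A : Set (Fin n)} {P : Setoid (Fin n)}
    (x : Emb n) (hx : x.val = (A, P)) {a b u v : Fin n}
    (hab : P a b) (hne1 : a ≠ b) (huv : P u v) (hne2 : u ≠ v) (hau : ¬ P a u)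
    (h : IsModularElem n x) : False := by
  -- distinctness facts
  have hav : ¬ P a v := fun hv => hau (P.trans' hv (P.symm' huv))
  have hbu : ¬ P b u := fun hv => hau (P.trans' hab hv)
  have hbv : ¬ P b v := fun hv => hau (P.trans' (P.trans' hab hv) (P.symm' huv))
  have hneau : a ≠ u := fun e => hau (e ▸ P.refl' a)
  have hneav : a ≠ v := fun e => hav (e ▸ P.refl' a)
  have hnebu : b ≠ u := fun e => hbu (e ▸ P.refl' b)
  have hnebv : b ≠ v := fun e => hbv (e ▸ P.refl' b)
  have hbnot : b ∉ ({a, u} : Set (Fin n)) := by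
    rintro (rfl | rfl)
    · exact hne1 rfl
    · exact hnebu rfl
  have hvnot : v ∉ ({a, u} : Set (Fin n)) := by
    rintro (rfl | rfl)
    · exact hneav rfl
    · exact hne2 rfl
  set Q : Setoid (Fin n) := modp n {a, u} ⊔ modp n {b, v} with hQdef
  have hQ : Q = mergeC {b, v} (modp n {a, u}) := by
    rw [hQdef, sup_modp_eq_mergeC]
  -- instantiate modularity at y0 = (∅, Q)
  have hy0 : IsEmbedded n (∅, Q) := embedded_empty n Q
  have heq := h ⟨(∅, Q), hy0⟩
  rw [hx] at heq
  have hxemb : IsEmbedded n (A, P) := hx ▸ x.prop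
  obtain ⟨hmodA, -⟩ := embedded_parts hxemb
  -- sup and inf
  have hsup : ((A : Set (Fin n)), P) ⊔ (∅, Q) = (A ∪ ∅, P ⊔ Q) := by
    rw [Prod.sup_def]
    simp
  have hinf : ((A : Set (Fin n)), P) ⊓ (∅, Q) = (∅, P ⊓ Q) := by
    rw [Prod.inf_def]
    simp
  -- join setoid
  have hPQ : P ⊔ Q = mergeC {b, v} (mergeC {a, u} P) := by
    rw [hQdef, ← sup_assoc, sup_modp_eq_mergeC, sup_modp_eq_mergeC]
  have hS : (P ⊔ Q) ⊔ modp n (A ∪ ∅) = mergeC {b, v} (mergeC {a, u} P) := by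
    rw [Set.union_empty, sup_eq_left.mpr (le_trans hmodA (le_sup_left : P ≤ P ⊔ Q)), hPQ]
  have hjoin : EmbClosure n (((A : Set (Fin n)), P) ⊔ (∅, Q)) =
      ({z | ∃ c ∈ A ∪ ∅, (mergeC {b, v} (mergeC {a, u} P)) z c},
        mergeC {b, v} (mergeC {a, u} P)) := by
    rw [hsup]
    unfold EmbClosure
    rw [show ((A ∪ ∅, P ⊔ Q) : XN n).2 ⊔ modp n ((A ∪ ∅, P ⊔ Q) : XN n).1
        = mergeC {b, v} (mergeC {a, u} P) from hS]
  -- meet setoid is ⊥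
  have hmeet : P ⊓ Q = ⊥ := by
    apply le_antisymm _ bot_le
    rw [Setoid.le_def]
    intro z w hzw
    have hP : P z w := ((show (P ⊓ Q) z w ↔ P z w ∧ Q z w from Setoid.inf_iff_and).mp hzw).1
    have hQzw : Q z w := ((show (P ⊓ Q) z w ↔ P z w ∧ Q z w from Setoid.inf_iff_and).mp hzw).2
    rw [hQ] at hQzw
    have hms : mergeSet ({b, v} : Set (Fin n)) (modp n {a, u})
        = {b, v} := by
      ext t
      constructor
      · rintro ⟨c, hc, hrel⟩
        rcases hrel with rfl | ⟨ht, hc'⟩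
        · exact hc
        · rcases hc with rfl | rfl
          · exact absurd hc' hbnot
          · exact absurd hc' hvnot
      · intro ht
        exact ⟨t, ht, Setoid.refl' _ t⟩
    rcases hQzw with hm | ⟨hz, hw⟩
    · rcases (modp_rel.mp hm) with rfl | ⟨hz', hw'⟩
      · rfl
      · rcases hz' with rfl | rfl <;> rcases hw' with rfl | rfl
        · rfl
        · exact absurd hP hau
        · exact absurd (P.symm' hP) hau
        · rfl
    · rw [hms] at hz hw
      rcases hz with rfl | rfl <;> rcases hw with rfl | rfl
      · rfl
      · exact absurd hP hbv
      · exact absurd (P.symm' hP) hbv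
      · rfl
  -- numBlocks computations
  have hm1 : numBlocks (modp n ({a, u} : Set (Fin n))) + 2 = n + 1 := by
    have hne : ({a,u} : Set (Fin n)).Nonempty := ⟨a, Or.inl rfl⟩
    have := numBlocks_modp hne
    rwa [Set.ncard_pair hneau] at this
  have hk1 : (cls (modp n ({a,u} : Set (Fin n))) '' ({b,v} : Set (Fin n))).ncard = 2 := by
    rw [Set.image_pair, cls_modp_of_not_mem hbnot, cls_modp_of_not_mem hvnot]
    exact Set.ncard_pair (by simpa using hnebv)
  have hQblocks : numBlocks Q + 2 = numBlocks (modp n ({a,u} : Set (Fin n))) + 1 := by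
    have hne : ({b,v} : Set (Fin n)).Nonempty := ⟨b, Or.inl rfl⟩
    have := numBlocks_mergeC (Q := modp n ({a,u} : Set (Fin n))) hne
    rw [hk1] at this
    rw [hQ]
    exact this
  have hk2 : (cls P '' ({a,u} : Set (Fin n))).ncard = 2 := by
    rw [Set.image_pair]
    refine Set.ncard_pair (fun hcc => hau (cls_eq_iff.mp hcc))
  have hM2 : numBlocks (mergeC ({a,u} : Set (Fin n)) P) + 2 = numBlocks P + 1 := by
    have hne : ({a,u} : Set (Fin n)).Nonempty := ⟨a, Or.inl rfl⟩
    have := numBlocks_mergeC (Q := P) hne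
    rwa [hk2] at this
  have hbM : b ∈ mergeSet ({a,u} : Set (Fin n)) P := ⟨a, Or.inl rfl, P.symm' hab⟩
  have hvM : v ∈ mergeSet ({a,u} : Set (Fin n)) P := ⟨u, Or.inr rfl, P.symm' huv⟩
  have hk3 : (cls (mergeC ({a,u} : Set (Fin n)) P) '' ({b,v} : Set (Fin n))).ncard = 1 := by
    rw [Set.image_pair]
    have : cls (mergeC ({a,u} : Set (Fin n)) P) v = cls (mergeC ({a,u} : Set (Fin n)) P) b := by
      apply cls_eq_cls
      exact Or.inr ⟨hvM, hbM⟩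
    rw [this, Set.pair_eq_singleton, Set.ncard_singleton]
  have hSblocks : numBlocks (mergeC {b, v} (mergeC ({a,u} : Set (Fin n)) P)) + 1
      = numBlocks (mergeC ({a,u} : Set (Fin n)) P) + 1 := by
    have hne : ({b,v} : Set (Fin n)).Nonempty := ⟨b, Or.inl rfl⟩
    have := numBlocks_mergeC (Q := mergeC ({a,u} : Set (Fin n)) P) hne
    rwa [hk3] at this
  -- assemble
  rw [hjoin, hinf, hmeet] at heq
  rw [erank_def, erank_def, erank_def, erank_def] at heq
  simp only at heq
  rw [Set.union_empty] at heq
  have hminemp : min (∅ : Set (Fin n)).ncard 1 = 0 := by simp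
  rw [hminemp] at heq
  have hbP := numBlocks_le P
  have hbS := numBlocks_le (mergeC {b, v} (mergeC ({a,u} : Set (Fin n)) P))
  have hbQ := numBlocks_le Q
  have hbB := numBlocks_bot (n := n)
  have hbM2 := numBlocks_le (mergeC ({a,u} : Set (Fin n)) P)
  have hposm1 := numBlocks_pos hn (modp n ({a,u} : Set (Fin n)))
  -- min over A terms are equal on both sides
  rcases A.eq_empty_or_nonempty with rfl | hA
  · have hT : {z | ∃ c ∈ (∅ : Set (Fin n)), (mergeC {b, v} (mergeC ({a,u} : Set (Fin n)) P)) z c}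
        = ∅ := by simp
    rw [hT, hminemp] at heq
    omega
  · have hT : ({z | ∃ c ∈ A, (mergeC {b, v} (mergeC ({a,u} : Set (Fin n)) P)) z c}
        : Set (Fin n)).Nonempty := by
      obtain ⟨c, hc⟩ := hA
      exact ⟨c, c, hc, Setoid.refl' _ c⟩
    rw [min_ncard_of_nonempty hA, min_ncard_of_nonempty hT] at heq
    omega



lemma not_modular_outside {n : ℕ} (hn : 1 ≤ n) {C : Set (Fin n)} {i c1 c2 : Fin n}
    (hiC : i ∉ C) (hc1 : c1 ∈ C) (hc2 : c2 ∈ C) (h12 : c1 ≠ c2)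
    (x : Emb n) (hx : x.val = ({i}, modp n C)) (h : IsModularElem n x) : False := by
  have hic1 : i ≠ c1 := fun e => hiC (e ▸ hc1)
  have hic2 : i ≠ c2 := fun e => hiC (e ▸ hc2)
  have hc2not : c2 ∉ ({i, c1} : Set (Fin n)) := by
    rintro (rfl | rfl)
    · exact hic2 rfl
    · exact h12 rfl
  have hy0 : IsEmbedded n ({c2}, modp n {i, c1}) := by
    have := isEmbedded_cls (modp n ({i, c1} : Set (Fin n))) c2
    rwa [cls_modp_of_not_mem hc2not] at this
  have heq := h ⟨({c2}, modp n {i, c1}), hy0⟩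
  rw [hx] at heq
  have hsup : (({i} : Set (Fin n)), modp n C) ⊔ ({c2}, modp n {i, c1})
      = ({i} ∪ {c2}, modp n C ⊔ modp n {i, c1}) := by
    rw [Prod.sup_def]
    simp [Set.sup_eq_union]
  have hinf : (({i} : Set (Fin n)), modp n C) ⊓ ({c2}, modp n {i, c1})
      = ({i} ∩ {c2}, modp n C ⊓ modp n {i, c1}) := by
    rw [Prod.inf_def]
    simp [Set.inf_eq_inter]
  have hle : modp n ({i} ∪ {c2} : Set (Fin n)) ≤ modp n C ⊔ modp n {i, c1} := by
    rw [sup_modp_eq_mergeC, Setoid.le_def]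
    have hiM : i ∈ mergeSet ({i, c1} : Set (Fin n)) (modp n C) :=
      ⟨i, Or.inl rfl, Setoid.refl' _ i⟩
    have hc2M : c2 ∈ mergeSet ({i, c1} : Set (Fin n)) (modp n C) :=
      ⟨c1, Or.inr rfl, Or.inr ⟨hc2, hc1⟩⟩
    rintro z w (rfl | ⟨hz, hw⟩)
    · exact Setoid.refl' _ z
    · refine Or.inr ⟨?_, ?_⟩
      · rcases hz with rfl | rfl
        · exact hiM
        · exact hc2M
      · rcases hw with rfl | rfl
        · exact hiM
        · exact hc2M
  have hS : (modp n C ⊔ modp n {i, c1}) ⊔ modp n ({i} ∪ {c2} : Set (Fin n))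
      = mergeC {i, c1} (modp n C) := by
    rw [sup_eq_left.mpr hle, sup_modp_eq_mergeC]
  have hjoin : EmbClosure n ((({i} : Set (Fin n)), modp n C) ⊔ ({c2}, modp n {i, c1})) =
      ({z | ∃ a ∈ ({i} ∪ {c2} : Set (Fin n)), (mergeC {i, c1} (modp n C)) z a},
        mergeC {i, c1} (modp n C)) := by
    rw [hsup]
    unfold EmbClosure
    rw [show (({i} ∪ {c2} : Set (Fin n)), modp n C ⊔ modp n {i, c1}).2
        ⊔ modp n (({i} ∪ {c2} : Set (Fin n)), modp n C ⊔ modp n {i, c1}).1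
        = mergeC {i, c1} (modp n C) from hS]
  have hmeet : modp n C ⊓ modp n ({i, c1} : Set (Fin n)) = ⊥ := by
    rw [modp_inf_modp]
    apply modp_eq_bot_of_subsingleton
    intro z hz w hw
    have hz' : z = c1 := by
      rcases hz.2 with rfl | rfl
      · exact absurd hz.1 hiC
      · rfl
    have hw' : w = c1 := by
      rcases hw.2 with rfl | rfl
      · exact absurd hw.1 hiC
      · rfl
    rw [hz', hw']
  have hmeetset : ({i} ∩ {c2} : Set (Fin n)) = ∅ := by
    ext z
    simp only [Set.mem_inter_iff, Set.mem_singleton_iff, Set.mem_empty_iff_false, iff_false]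
    rintro ⟨rfl, rfl⟩
    exact hic2 rfl
  have hCne : C.Nonempty := ⟨c1, hc1⟩
  have hm1 := numBlocks_modp hCne
  have hm2 : numBlocks (modp n ({i, c1} : Set (Fin n))) + 2 = n + 1 := by
    have hne : ({i, c1} : Set (Fin n)).Nonempty := ⟨i, Or.inl rfl⟩
    have := numBlocks_modp hne
    rwa [Set.ncard_pair hic1] at this
  have hk : (cls (modp n C) '' ({i, c1} : Set (Fin n))).ncard = 2 := by
    rw [Set.image_pair, cls_modp_of_not_mem hiC, cls_modp_of_mem hc1]
    refine Set.ncard_pair (fun hh => hiC ?_)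
    rw [← hh]
    rfl
  have hJ : numBlocks (mergeC ({i, c1} : Set (Fin n)) (modp n C)) + 2
      = numBlocks (modp n C) + 1 := by
    have hne : ({i, c1} : Set (Fin n)).Nonempty := ⟨i, Or.inl rfl⟩
    have := numBlocks_mergeC (Q := modp n C) hne
    rwa [hk] at this
  have hT : ({z | ∃ a ∈ ({i} ∪ {c2} : Set (Fin n)), (mergeC {i, c1} (modp n C)) z a}
      : Set (Fin n)).Nonempty :=
    ⟨i, i, Or.inl rfl, Setoid.refl' _ i⟩
  rw [hjoin, hinf, hmeet, hmeetset] at heq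
  rw [erank_def, erank_def, erank_def, erank_def] at heq
  simp only at heq
  have hminemp : min (∅ : Set (Fin n)).ncard 1 = 0 := by simp
  have hmini : min ({i} : Set (Fin n)).ncard 1 = 1 := by simp
  have hminc2 : min ({c2} : Set (Fin n)).ncard 1 = 1 := by simp
  rw [hminemp, hmini, hminc2, min_ncard_of_nonempty hT, numBlocks_bot] at heq
  have hb1 := numBlocks_le (modp n C)
  have hb2 := numBlocks_le (mergeC ({i, c1} : Set (Fin n)) (modp n C))
  have hcn := ncard_le_n C
  have hc2' : 2 ≤ C.ncard := by
    have := (Set.one_lt_ncard (Set.toFinite _)).mpr ⟨c1, hc1, c2, hc2, h12⟩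
    omega
  omega



def Shape (n : ℕ) (x : Emb n) : Prop :=
  (x.val.2 = ⊥ ∨ ∃ C : Set (Fin n), 1 < C.ncard ∧ x.val.2 = modp n C) ∧
    (x.val.1 = ∅ ∨ x.val.2 = modp n x.val.1)

lemma modular_iff_shape (n : ℕ) (hn : 1 ≤ n) :
    ∀ x : Emb n, IsModularElem n x ↔ Shape n x := by
  intro x
  obtain ⟨⟨A, P⟩, hemb⟩ := x
  have hx : (⟨(A, P), hemb⟩ : Emb n).val = (A, P) := rfl
  constructor
  · intro h
    have hS1 : P = ⊥ ∨ ∃ C : Set (Fin n), 1 < C.ncard ∧ P = modp n C := by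
      by_cases hPbot : P = ⊥
      · exact Or.inl hPbot
      obtain ⟨a, b, hab, hne⟩ := setoid_ne_bot_witness hPbot
      by_cases hone : ∀ u v, P u v → u = v ∨ (P u a ∧ P v a)
      · right
        refine ⟨cls P a, ?_, ?_⟩
        · exact (Set.one_lt_ncard (Set.toFinite _)).mpr
            ⟨b, P.symm' hab, a, mem_cls_self P a, Ne.symm hne⟩
        · apply Setoid.ext
          intro u v
          constructor
          · intro huv
            rcases hone u v huv with rfl | ⟨h1, h2⟩
            · exact Or.inl rfl
            · exact Or.inr ⟨h1, h2⟩
          · rintro (rfl | ⟨h1, h2⟩)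
            · exact P.refl' u
            · exact P.trans' h1 (P.symm' h2)
      · push_neg at hone
        obtain ⟨u, v, huv, hune, hnotu⟩ := hone
        have hua : ¬ P a u := fun hau =>
          hnotu (P.symm' hau) (P.trans' (P.symm' huv) (P.symm' hau))
        exact (not_modular_two_blocks hn _ hx hab hne huv hune hua h).elim
    have hS2 : A = ∅ ∨ P = modp n A := by
      by_cases hA : A = ∅
      · exact Or.inl hA
      right
      obtain ⟨a0, ha0⟩ := Set.nonempty_iff_ne_empty.mpr hA
      obtain ⟨hmodA, hclsA⟩ := embedded_parts hemb
      have hAcls : cls P a0 = A := hclsA a0 ha0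
      rcases hS1 with rfl | ⟨C, hC1, rfl⟩
      · have hA1 : A = {a0} := by rw [← hAcls, cls_bot]
        rw [hA1]
        exact (modp_eq_bot_of_subsingleton Set.subsingleton_singleton).symm
      · by_cases ha0C : a0 ∈ C
        · have hA1 : A = C := by rw [← hAcls, cls_modp_of_mem ha0C]
          rw [hA1]
        · have hA1 : A = {a0} := by rw [← hAcls, cls_modp_of_not_mem ha0C]
          obtain ⟨c1, hc1, c2, hc2, h12⟩ := (Set.one_lt_ncard (Set.toFinite _)).mp hC1
          exact (not_modular_outside hn ha0C hc1 hc2 h12 _ (by rw [hx, hA1]) h).elim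
    exact ⟨hS1, hS2⟩
  · rintro ⟨hS1, hS2⟩
    have hS1' : P = ⊥ ∨ ∃ C : Set (Fin n), 1 < C.ncard ∧ P = modp n C := hS1
    have hS2' : A = ∅ ∨ P = modp n A := hS2
    by_cases hA : A = ∅
    · rcases hS1' with hPbot | ⟨C, hC1, hPC⟩
      · apply isModular_bot' _ (by rw [hx, hA, hPbot] : _)
      · have hCne : C.Nonempty := Set.nonempty_of_ncard_ne_zero (by omega)
        apply isModular_empty' hn C hCne _ (by rw [hx, hA, hPC] : _)
    · have hPA : P = modp n A := by
        rcases hS2' with h' | h'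
        · exact absurd h' hA
        · exact h'
      apply isModular_full' hn A (Set.nonempty_iff_ne_empty.mpr hA) _ (by rw [hx, hPA] : _)



def suppS {n : ℕ} (P : Setoid (Fin n)) : Set (Fin n) := {c | ∃ d, d ≠ c ∧ P d c}

lemma suppS_bot {n : ℕ} : suppS (⊥ : Setoid (Fin n)) = ∅ := by
  ext c
  simp only [suppS, Set.mem_setOf_eq, Set.mem_empty_iff_false, iff_false]
  rintro ⟨d, hd, hrel⟩
  exact hd hrel

lemma suppS_modp {n : ℕ} {C : Set (Fin n)} (hC : 1 < C.ncard) : suppS (modp n C) = C := by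
  obtain ⟨x1, hx1, x2, hx2, hne⟩ := (Set.one_lt_ncard (Set.toFinite _)).mp hC
  ext c
  constructor
  · rintro ⟨d, hd, rfl | ⟨h1, h2⟩⟩
    · exact absurd rfl hd
    · exact h2
  · intro hc
    by_cases h : x1 = c
    · exact ⟨x2, fun e => hne (h.trans e.symm), Or.inr ⟨hx2, hc⟩⟩
    · exact ⟨x1, h, Or.inr ⟨hx1, hc⟩⟩

open scoped Classical in
noncomputable def shapeEquiv (n : ℕ) :
    {x : Emb n // Shape n x} ≃
      ({C : Set (Fin n) // C.Nonempty} ⊕ {C : Set (Fin n) // C = ∅ ∨ 1 < C.ncard}) where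
  toFun x :=
    if h : x.val.val.1 = ∅ then
      Sum.inr ⟨suppS x.val.val.2, by
        rcases x.prop.1 with hb | ⟨C, hC, hPC⟩
        · rw [hb, suppS_bot]
          exact Or.inl rfl
        · rw [hPC, suppS_modp hC]
          exact Or.inr hC⟩
    else
      Sum.inl ⟨x.val.val.1, Set.nonempty_iff_ne_empty.mpr h⟩
  invFun t :=
    match t with
    | Sum.inl ⟨C, hC⟩ =>
      ⟨⟨(C, modp n C), by
          obtain ⟨c, hc⟩ := hC
          have := isEmbedded_cls (modp n C) c
          rwa [cls_modp_of_mem hc] at this⟩, by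
        constructor
        · by_cases h2 : 1 < C.ncard
          · exact Or.inr ⟨C, h2, rfl⟩
          · left
            show modp n C = ⊥
            apply modp_eq_bot_of_subsingleton
            intro a ha b hb
            have hle : C.ncard ≤ 1 := by omega
            exact ((Set.ncard_le_one (Set.toFinite _)).mp hle) a ha b hb
        · exact Or.inr rfl⟩
    | Sum.inr ⟨C, hC⟩ =>
      ⟨⟨(∅, modp n C), embedded_empty n _⟩, by
        constructor
        · rcases hC with rfl | h2
          · exact Or.inl (modp_eq_bot_of_subsingleton Set.subsingleton_empty)
          · exact Or.inr ⟨C, h2, rfl⟩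
        · exact Or.inl rfl⟩
  left_inv := by
    rintro ⟨⟨⟨A, P⟩, hemb⟩, hsh⟩
    have hsh1 : P = ⊥ ∨ ∃ C : Set (Fin n), 1 < C.ncard ∧ P = modp n C := hsh.1
    have hsh2 : A = ∅ ∨ P = modp n A := hsh.2
    by_cases hA : A = ∅
    · simp only [dif_pos hA]
      apply Subtype.ext
      apply Subtype.ext
      show ((∅ : Set (Fin n)), modp n (suppS P)) = (A, P)
      rw [hA]
      refine Prod.ext rfl ?_
      show modp n (suppS P) = P
      rcases hsh1 with rfl | ⟨C, hC, rfl⟩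
      · rw [suppS_bot]
        exact modp_eq_bot_of_subsingleton Set.subsingleton_empty
      · rw [suppS_modp hC]
    · simp only [dif_neg hA]
      apply Subtype.ext
      apply Subtype.ext
      show ((A : Set (Fin n)), modp n A) = (A, P)
      refine Prod.ext rfl ?_
      show modp n A = P
      rcases hsh2 with h' | h'
      · exact absurd h' hA
      · exact h'.symm
  right_inv := by
    rintro (⟨C, hC⟩ | ⟨C, hC⟩)
    · have hne : C ≠ ∅ := Set.nonempty_iff_ne_empty.mp hC
      simp only [dif_neg hne]
    · have hemp : (∅ : Set (Fin n)) = ∅ := rfl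
      dsimp only
      rw [dif_pos hemp]
      congr 1
      apply Subtype.ext
      show suppS (modp n C) = C
      rcases hC with rfl | h2
      · rw [modp_eq_bot_of_subsingleton Set.subsingleton_empty, suppS_bot]
      · rw [suppS_modp h2]

lemma card_nonempty_sets (n : ℕ) :
    Nat.card {C : Set (Fin n) // C.Nonempty} = 2 ^ n - 1 := by
  have htot : Nat.card (Set (Fin n)) = 2 ^ n := by
    rw [Nat.card_eq_fintype_card, Fintype.card_set, Fintype.card_fin]
  have h1 : Nat.card {C : Set (Fin n) // C.Nonempty}
      = ({C : Set (Fin n) | C.Nonempty}).ncard := by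
    rw [← Nat.card_coe_set_eq]
    rfl
  have h2 : ({C : Set (Fin n) | C.Nonempty} : Set (Set (Fin n)))ᶜ = {∅} := by
    ext C
    simp [Set.not_nonempty_iff_eq_empty]
  have h3 := Set.ncard_add_ncard_compl ({C : Set (Fin n) | C.Nonempty})
    (Set.toFinite _) (Set.toFinite _)
  rw [h2, Set.ncard_singleton, htot] at h3
  have : 1 ≤ 2 ^ n := Nat.one_le_two_pow
  omega

lemma card_good_sets (n : ℕ) :
    Nat.card {C : Set (Fin n) // C = ∅ ∨ 1 < C.ncard} = 2 ^ n - n := by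
  have htot : Nat.card (Set (Fin n)) = 2 ^ n := by
    rw [Nat.card_eq_fintype_card, Fintype.card_set, Fintype.card_fin]
  have h1 : Nat.card {C : Set (Fin n) // C = ∅ ∨ 1 < C.ncard}
      = ({C : Set (Fin n) | C = ∅ ∨ 1 < C.ncard}).ncard := by
    rw [← Nat.card_coe_set_eq]
    rfl
  have h2 : ({C : Set (Fin n) | C = ∅ ∨ 1 < C.ncard} : Set (Set (Fin n)))ᶜ
      = (fun a : Fin n => ({a} : Set (Fin n))) '' Set.univ := by
    ext C
    simp only [Set.mem_compl_iff, Set.mem_setOf_eq, not_or, not_lt, Set.image_univ,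
      Set.mem_range]
    constructor
    · rintro ⟨hne, hle⟩
      have hpos : 0 < C.ncard :=
        (Set.ncard_pos (Set.toFinite _)).mpr (Set.nonempty_iff_ne_empty.mpr hne)
      have : C.ncard = 1 := by omega
      obtain ⟨a, rfl⟩ := Set.ncard_eq_one.mp this
      exact ⟨a, rfl⟩
    · rintro ⟨a, rfl⟩
      constructor
      · exact Set.singleton_ne_empty a
      · rw [Set.ncard_singleton]
  have himg : ((fun a : Fin n => ({a} : Set (Fin n))) '' Set.univ).ncard = n := by
    rw [Set.ncard_image_of_injective _ (fun a b h => by simpa using h), Set.ncard_univ,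
      card_fin']
  have h3 := Set.ncard_add_ncard_compl ({C : Set (Fin n) | C = ∅ ∨ 1 < C.ncard})
    (Set.toFinite _) (Set.toFinite _)
  rw [h2, himg, htot] at h3
  have : n < 2 ^ n := Nat.lt_two_pow_self
  omega


theorem modular_elements (n : ℕ) (hn : 1 ≤ n) :
    (∀ x : Emb n, IsModularElem n x ↔
      ((x.val.2 = ⊥ ∨ ∃ C : Set (Fin n), 1 < C.ncard ∧ x.val.2 = modp n C) ∧
        (x.val.1 = ∅ ∨ x.val.2 = modp n x.val.1))) ∧
    Nat.card {x : Emb n // IsModularElem n x} = 2 ^ (n + 1) - (n + 1) := by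
  have hiff := modular_iff_shape n hn
  constructor
  · exact hiff
  · have e1 : {x : Emb n // IsModularElem n x} ≃ {x : Emb n // Shape n x} :=
      Equiv.subtypeEquivRight hiff
    rw [Nat.card_congr (e1.trans (shapeEquiv n)), Nat.card_sum, card_nonempty_sets,
      card_good_sets]
    have h1 : n < 2 ^ n := Nat.lt_two_pow_self
    have h2 : 2 ^ (n + 1) = 2 * 2 ^ n := by
      rw [pow_succ]
      ring
    omega
end

section
/- For every embedded subset (A,P) ∈ ℰ^N, the Möbius function from the bottom element is given explicitly by μ_{ℰ^N}((∅,P_⊥),(A,P)) = (−1)^{|A|}·|A|! · ∏_{B ∈ P^{A^c}} (−1)^{|B|−1}(|B|−1)!, where P^{A^c} is the partition of A^c = N∖A induced by P (for A = ∅ the factor (−1)^{|A|}|A|! equals 1 and the product runs over all blocks of P). -/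
open scoped BigOperators

open scoped Classical


/-- weight of one block of size `k` -/
def gfac (k : ℕ) : ℤ := (-1) ^ (k - 1) * (Nat.factorial (k - 1) : ℤ)

/-- weight of a partition -/
noncomputable def wt {α : Type*} (Q : Setoid α) : ℤ := ∏ᶠ C ∈ Q.classes, gfac C.ncard

instance setoidFinite {α : Type*} [Finite α] : Finite (Setoid α) :=
  Finite.of_injective (fun Q : Setoid α => (fun a b => Q a b : α → α → Prop))
    (fun Q R h => Setoid.ext fun a b => iff_of_eq (congrFun (congrFun h a) b))

lemma class_rel {α : Type*} {Q : Setoid α} {D : Set α} (hD : D ∈ Q.classes) :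
    ∀ {x y}, x ∈ D → y ∈ D → Q x y := by
  obtain ⟨w, rfl⟩ := hD
  intro x y hx hy
  exact Q.trans' hx (Q.symm' hy)

lemma class_sat {α : Type*} {Q : Setoid α} {D : Set α} (hD : D ∈ Q.classes) :
    ∀ {x y}, x ∈ D → Q x y → y ∈ D := by
  obtain ⟨w, rfl⟩ := hD
  intro x y hx hxy
  exact Q.trans' (Q.symm' hxy) hx

/-- Add a new point `none` to the block `D` (which is empty or a class of `Q`). -/
def optLift {α : Type*} (Q : Setoid α) (D : Set α) (hD : D = ∅ ∨ D ∈ Q.classes) :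
    Setoid (Option α) where
  r a b :=
    match a, b with
    | none, none => True
    | none, some y => y ∈ D
    | some x, none => x ∈ D
    | some x, some y => Q x y
  iseqv := by
    have hrel : ∀ {x y}, x ∈ D → y ∈ D → Q x y := by
      intro x y hx hy
      rcases hD with rfl | hD
      · exact absurd hx (Set.notMem_empty _)
      · exact class_rel hD hx hy
    have hsat : ∀ {x y}, x ∈ D → Q x y → y ∈ D := by
      intro x y hx hxy
      rcases hD with rfl | hD
      · exact absurd hx (Set.notMem_empty _)
      · exact class_sat hD hx hxy
    refine ⟨fun a => ?_, fun {a b} h => ?_, fun {a b c} hab hbc => ?_⟩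
    · cases a with
      | none => trivial
      | some x => exact Q.refl' x
    · cases a <;> cases b
      · trivial
      · exact h
      · exact h
      · exact Q.symm' h
    · cases a with
      | none =>
        cases b with
        | none => exact hbc
        | some y =>
          cases c with
          | none => trivial
          | some z => exact hsat hab hbc
      | some x =>
        cases b with
        | none =>
          cases c with
          | none => exact hab
          | some z => exact hrel hab hbc
        | some y =>
          cases c with
          | none => exact hsat hbc (Q.symm' hab)
          | some z => exact Q.trans' hab hbc

section optLiftLemmas

variable {α : Type*} {Q Q' : Setoid α} {D D' : Set α}
  {hD : D = ∅ ∨ D ∈ Q.classes} {hD' : D' = ∅ ∨ D' ∈ Q'.classes}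

@[simp] lemma optLift_some_some {x y : α} : optLift Q D hD (some x) (some y) ↔ Q x y := Iff.rfl
@[simp] lemma optLift_some_none {x : α} : optLift Q D hD (some x) none ↔ x ∈ D := Iff.rfl
@[simp] lemma optLift_none_some {y : α} : optLift Q D hD none (some y) ↔ y ∈ D := Iff.rfl
@[simp] lemma optLift_none_none : optLift Q D hD none none := trivial

/-- project a partition of `Option α` back to `α`. -/
def projS {α : Type*} (R : Setoid (Option α)) : Setoid α := Setoid.comap some R

/-- the block of `none`, minus `none`. -/
def DofS {α : Type*} (R : Setoid (Option α)) : Set α := {x | R (some x) none}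

@[simp] lemma projS_rel {R : Setoid (Option α)} {x y : α} :
    projS R x y ↔ R (some x) (some y) := Iff.rfl

@[simp] lemma mem_DofS {R : Setoid (Option α)} {x : α} : x ∈ DofS R ↔ R (some x) none := Iff.rfl

@[simp] lemma projS_optLift : projS (optLift Q D hD) = Q := Setoid.ext fun _ _ => Iff.rfl

@[simp] lemma DofS_optLift : DofS (optLift Q D hD) = D := rfl

lemma DofS_spec {α : Type*} (R : Setoid (Option α)) :
    DofS R = ∅ ∨ DofS R ∈ (projS R).classes := by
  rcases Set.eq_empty_or_nonempty (DofS R) with h | ⟨w, hw⟩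
  · exact Or.inl h
  · refine Or.inr ⟨w, ?_⟩
    ext x
    simp only [mem_DofS, Set.mem_setOf_eq, projS_rel]
    exact ⟨fun hx => R.trans' hx (R.symm' hw), fun hx => R.trans' hx hw⟩

lemma optLift_proj_Dof {α : Type*} (R : Setoid (Option α)) :
    optLift (projS R) (DofS R) (DofS_spec R) = R := by
  refine Setoid.ext fun a b => ?_
  cases a <;> cases b
  · exact iff_of_true trivial (R.refl' none)
  · exact ⟨fun h => R.symm' h, fun h => R.symm' h⟩
  · exact Iff.rfl
  · exact Iff.rfl

lemma optLift_le_iff : optLift Q D hD ≤ optLift Q' D' hD' ↔ Q ≤ Q' ∧ D ⊆ D' := by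
  constructor
  · intro h
    rw [Setoid.le_def] at h
    exact ⟨Setoid.le_def.mpr fun {x y} hxy => h (optLift_some_some.mpr hxy),
      fun x hx => h (optLift_some_none.mpr hx)⟩
  · rintro ⟨h1, h2⟩
    rw [Setoid.le_def]
    intro a b hab
    cases a <;> cases b
    · trivial
    · exact h2 hab
    · exact h2 hab
    · exact Setoid.le_def.mp h1 hab

end optLiftLemmas
instance optionFinite {α : Type*} [Finite α] : Finite (Option α) := by
  have := Fintype.ofFinite α
  infer_instance
section classesLemmas

variable {α : Type*} {Q : Setoid α} {D : Set α} {hD : D = ∅ ∨ D ∈ Q.classes}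

lemma classes_optLift (Q : Setoid α) (D : Set α) (hD : D = ∅ ∨ D ∈ Q.classes) :
    (optLift Q D hD).classes =
      insert (insert none (some '' D)) ((Set.image some) '' (Q.classes \ {D})) := by
  have hclassnone : {a : Option α | optLift Q D hD a none} = insert none (some '' D) := by
    ext a
    cases a with
    | none => simp
    | some z => simp
  ext s
  constructor
  · rintro ⟨y, rfl⟩
    cases y with
    | none => exact Or.inl hclassnone
    | some w =>
      by_cases hw : w ∈ D
      · have hDc : D ∈ Q.classes := by
          rcases hD with rfl | hDc
          · exact absurd hw (Set.notMem_empty _)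
          · exact hDc
        refine Or.inl ?_
        ext a
        cases a with
        | none => simpa using hw
        | some z =>
          simp only [Set.mem_setOf_eq, optLift_some_some, Set.mem_insert_iff]
          constructor
          · intro hz
            exact Or.inr ⟨z, class_sat hDc hw (Q.symm' hz), rfl⟩
          · rintro (h | ⟨z', hz', hzz⟩)
            · exact absurd h (by simp)
            · obtain rfl : z' = z := Option.some_injective _ hzz
              exact class_rel hDc hz' hw
      · refine Or.inr ⟨{x | Q x w}, ⟨Q.mem_classes w, ?_⟩, ?_⟩
        · intro hEq
          rw [Set.mem_singleton_iff] at hEq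
          exact hw (hEq ▸ (Q.refl' w : w ∈ {x | Q x w}))
        · ext a
          cases a with
          | none => simpa using hw
          | some z => simp
  · rintro (rfl | ⟨C, ⟨hC, hCD⟩, rfl⟩)
    · exact ⟨none, hclassnone.symm⟩
    · obtain ⟨w, rfl⟩ := hC
      have hw : w ∉ D := by
        intro hwD
        have hDc : D ∈ Q.classes := by
          rcases hD with rfl | hDc
          · exact absurd hwD (Set.notMem_empty _)
          · exact hDc
        exact hCD (Set.mem_singleton_iff.mpr
          (Setoid.eq_of_mem_classes (Q.mem_classes w) (Q.refl' w) hDc hwD))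
      refine ⟨some w, ?_⟩
      ext a
      cases a with
      | none => simpa using hw
      | some z => simp

lemma insert_none_not_mem_image {D : Set α} {s : Set (Set α)} :
    insert none (some '' D) ∉ (Set.image some) '' s := by
  rintro ⟨C, _, hEq⟩
  have : (none : Option α) ∈ some '' C := hEq.symm ▸ Set.mem_insert none _
  obtain ⟨z, _, hz⟩ := this
  exact Option.some_ne_none _ hz

lemma wt_optLift [Finite α] (Q : Setoid α) (D : Set α) (hD : D = ∅ ∨ D ∈ Q.classes) :
    wt (optLift Q D hD) = gfac (D.ncard + 1) * ∏ᶠ C ∈ Q.classes \ {D}, gfac C.ncard := by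
  rw [wt, classes_optLift Q D hD,
    finprod_mem_insert _ insert_none_not_mem_image (Set.toFinite _)]
  congr 1
  · congr 1
    rw [Set.ncard_insert_of_notMem (by simp) (Set.toFinite _),
      Set.ncard_image_of_injective _ (Option.some_injective α)]
  · refine (finprod_mem_eq_of_bijOn (Set.image some)
      ((Set.injOn_of_injective (Set.image_injective.mpr (Option.some_injective α))).bijOn_image)
      fun C _ => ?_).symm
    rw [Set.ncard_image_of_injective _ (Option.some_injective α)]

lemma wt_bot {α : Type*} : wt (⊥ : Setoid α) = 1 := by
  rw [wt, ← finprod_mem_one (⊥ : Setoid α).classes]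
  refine finprod_mem_congr rfl fun C hC => ?_
  obtain ⟨y, rfl⟩ := hC
  have : {x | (⊥ : Setoid α) x y} = {y} := by
    ext x
    simp [Setoid.bot_def]
  rw [this, Set.ncard_singleton]
  simp [gfac]

lemma ncard_class_bot {α : Type*} {C : Set α} (hC : C ∈ (⊥ : Setoid α).classes) : C.ncard = 1 := by
  obtain ⟨y, rfl⟩ := hC
  have : {x | (⊥ : Setoid α) x y} = {y} := by
    ext x
    simp [Setoid.bot_def]
  rw [this, Set.ncard_singleton]

lemma setoid_ne_bot_iff {α : Type*} {P : Setoid α} : P ≠ ⊥ ↔ ∃ t u, t ≠ u ∧ P t u := by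
  constructor
  · intro h
    by_contra hc
    push_neg at hc
    refine h (le_antisymm ?_ bot_le)
    rw [Setoid.le_def]
    intro x y hxy
    have : x = y := by
      by_contra hne
      exact hc x y hne hxy
    subst this
    exact (⊥ : Setoid α).refl' x
  · rintro ⟨t, u, htu, hrel⟩ hbot
    rw [hbot] at hrel
    exact htu hrel

end classesLemmas
section transport

variable {γ α : Type*}

lemma comap_equiv_le_iff (e : γ ≃ α) (Q R : Setoid α) :
    Setoid.comap (⇑e) Q ≤ Setoid.comap (⇑e) R ↔ Q ≤ R := by
  simp only [Setoid.le_def, Setoid.comap_rel]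
  constructor
  · intro h x y hxy
    have := h (x := e.symm x) (y := e.symm y)
    rw [e.apply_symm_apply, e.apply_symm_apply] at this
    exact this hxy
  · intro h x y hxy
    exact h hxy

lemma comap_equiv_injective (e : γ ≃ α) :
    Function.Injective (Setoid.comap (⇑e) : Setoid α → Setoid γ) := by
  intro Q R h
  have key : ∀ x y, Q (e x) (e y) ↔ R (e x) (e y) := fun x y => by
    rw [← Setoid.comap_rel, ← Setoid.comap_rel, h]
  refine Setoid.ext fun a b => ?_
  simpa using key (e.symm a) (e.symm b)

lemma comap_comap_symm (e : γ ≃ α) (Q : Setoid γ) :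
    Setoid.comap (⇑e) (Setoid.comap (⇑e.symm) Q) = Q :=
  Setoid.ext fun a b => by simp [Setoid.comap_rel]

lemma comap_equiv_bot (e : γ ≃ α) : Setoid.comap (⇑e) (⊥ : Setoid α) = ⊥ :=
  Setoid.ext fun a b => by simp [Setoid.comap_rel, Setoid.bot_def]

lemma comap_equiv_eq_bot_iff (e : γ ≃ α) (Q : Setoid α) :
    Setoid.comap (⇑e) Q = ⊥ ↔ Q = ⊥ := by
  constructor
  · intro h
    refine Setoid.ext fun x y => ?_
    have h1 : Setoid.comap (⇑e) Q (e.symm x) (e.symm y) ↔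
        (⊥ : Setoid γ) (e.symm x) (e.symm y) := by rw [h]
    rw [Setoid.comap_rel] at h1
    simp only [Equiv.apply_symm_apply] at h1
    simp only [Setoid.bot_def] at h1 ⊢
    rw [h1]
    exact e.symm.injective.eq_iff
  · rintro rfl
    exact comap_equiv_bot e

lemma classes_comap_equiv (e : γ ≃ α) (Q : Setoid α) :
    (Setoid.comap (⇑e) Q).classes = (fun s => e ⁻¹' s) '' Q.classes := by
  ext s
  constructor
  · rintro ⟨y, rfl⟩
    exact ⟨{a | Q a (e y)}, Q.mem_classes (e y), rfl⟩
  · rintro ⟨C, ⟨w, rfl⟩, rfl⟩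
    refine ⟨e.symm w, ?_⟩
    ext x
    simp [Setoid.comap_rel]

lemma wt_comap_equiv [Finite α] (e : γ ≃ α) (Q : Setoid α) :
    wt (Setoid.comap (⇑e) Q) = wt Q := by
  have : Finite γ := Finite.of_equiv α e.symm
  rw [wt, wt, classes_comap_equiv]
  refine (finprod_mem_eq_of_bijOn (fun s => e ⁻¹' s)
    ((Set.injOn_of_injective (fun s t hst => ?_)).bijOn_image) fun C _ => ?_).symm
  · have := congrArg (fun u => e '' u) hst
    simpa [Set.image_preimage_eq _ e.surjective] using this
  · show gfac C.ncard = gfac ((⇑e ⁻¹' C)).ncard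
    rw [Set.ncard_preimage_of_injective_subset_range e.injective (by simp)]

lemma sum_wt_transport [Finite α] (e : γ ≃ α) (P : Setoid α) :
    ∑ᶠ Q ∈ {Q : Setoid α | Q ≤ P}, wt Q
      = ∑ᶠ R ∈ {R : Setoid γ | R ≤ Setoid.comap (⇑e) P}, wt R := by
  have : Finite γ := Finite.of_equiv α e.symm
  refine finsum_mem_eq_of_bijOn (Setoid.comap (⇑e)) ⟨?_, ?_, ?_⟩ fun Q _ => (wt_comap_equiv e Q).symm
  · intro Q hQ
    exact (comap_equiv_le_iff e Q P).mpr hQ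
  · exact Set.injOn_of_injective (comap_equiv_injective e)
  · intro R hR
    refine ⟨Setoid.comap (⇑e.symm) R, ?_, comap_comap_symm e R⟩
    have h2 : Setoid.comap (⇑e) (Setoid.comap (⇑e.symm) R) ≤ Setoid.comap (⇑e) P := by
      rw [comap_comap_symm]
      exact hR
    exact (comap_equiv_le_iff e _ _).mp h2

end transport

section ncardSum

variable {α : Type*} [Finite α]

lemma ncard_sUnion (s : Set (Set α)) : s.PairwiseDisjoint id →
    ((⋃₀ s).ncard : ℤ) = ∑ᶠ C ∈ s, (C.ncard : ℤ) := by
  refine Set.Finite.induction_on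
    (motive := fun s _ => s.PairwiseDisjoint id → (((⋃₀ s).ncard : ℤ) = ∑ᶠ C ∈ s, (C.ncard : ℤ)))
    s (Set.toFinite s) (fun _ => by simp) ?_
  intro a t hat htfin ih hd
  have hdt : t.PairwiseDisjoint id := hd.subset (Set.subset_insert a t)
  have hdisj2 : Disjoint a (⋃₀ t) := by
    rw [Set.disjoint_sUnion_right]
    intro b hb
    exact hd (Set.mem_insert a t) (Set.mem_insert_of_mem a hb) (fun h => hat (h ▸ hb))
  rw [Set.sUnion_insert, Set.ncard_union_eq hdisj2 (Set.toFinite _) (Set.toFinite _),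
    finsum_mem_insert _ hat (Set.toFinite _), ← ih hdt]
  push_cast
  ring

lemma sum_ncard_classes_subset (Q : Setoid α) (T : Set α)
    (hsat : ∀ C ∈ Q.classes, C ∩ T ≠ ∅ → C ⊆ T) :
    ∑ᶠ C ∈ {C ∈ Q.classes | C ⊆ T}, (C.ncard : ℤ) = (T.ncard : ℤ) := by
  have hTeq : T = ⋃₀ {C ∈ Q.classes | C ⊆ T} := by
    ext x
    constructor
    · intro hx
      refine ⟨{y | Q y x}, ⟨Q.mem_classes x, ?_⟩, Q.refl' x⟩
      refine hsat _ (Q.mem_classes x) ?_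
      exact Set.nonempty_iff_ne_empty.mp ⟨x, Q.refl' x, hx⟩
    · rintro ⟨C, ⟨_, hCT⟩, hxC⟩
      exact hCT hxC
  have hdisj : {C ∈ Q.classes | C ⊆ T}.PairwiseDisjoint id := by
    intro C hC C' hC' hne
    rw [Function.onFun, Set.disjoint_left]
    intro x hx hx'
    exact hne (Setoid.eq_of_mem_classes hC.1 hx hC'.1 hx')
  rw [← ncard_sUnion _ hdisj, ← hTeq]

end ncardSum

lemma gfac_one : gfac 1 = 1 := by simp [gfac]

lemma gfac_succ {k : ℕ} (hk : 1 ≤ k) : gfac (k + 1) = -(k : ℤ) * gfac k := by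
  obtain ⟨j, rfl⟩ := Nat.exists_eq_add_of_le hk
  have h1 : 1 + j + 1 - 1 = j + 1 := by omega
  have h2 : 1 + j - 1 = j := by omega
  rw [gfac, gfac, h1, h2, Nat.factorial_succ, pow_succ]
  push_cast
  ring
lemma setoid_option_ext {β : Type*} {R R' : Setoid (Option β)}
    (h1 : projS R = projS R') (h2 : DofS R = DofS R') : R = R' := by
  refine Setoid.ext fun a b => ?_
  have hD : ∀ x, R (some x) none ↔ R' (some x) none := fun x => by
    rw [show (R (some x) none) = (x ∈ DofS R) from rfl,
      show (R' (some x) none) = (x ∈ DofS R') from rfl, h2]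
  have hQ : ∀ x y, R (some x) (some y) ↔ R' (some x) (some y) := fun x y => by
    rw [show (R (some x) (some y)) = (projS R x y) from rfl,
      show (R' (some x) (some y)) = (projS R' x y) from rfl, h1]
  cases a <;> cases b
  · exact iff_of_true (R.refl' none) (R'.refl' none)
  · exact ⟨fun h => R'.symm' ((hD _).mp (R.symm' h)), fun h => R.symm' ((hD _).mpr (R'.symm' h))⟩
  · exact hD _
  · exact hQ _ _

lemma le_iff_proj_Dof {β : Type*} {R S : Setoid (Option β)} :
    R ≤ S ↔ projS R ≤ projS S ∧ DofS R ⊆ DofS S := by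
  constructor
  · intro h
    rw [Setoid.le_def] at h
    exact ⟨Setoid.le_def.mpr fun {x y} hxy => h (hxy : R (some x) (some y)),
      fun x hx => h (hx : R (some x) none)⟩
  · rintro ⟨h1, h2⟩
    rw [Setoid.le_def]
    intro a b hab
    cases a <;> cases b
    · exact S.refl' none
    · exact S.symm' (h2 (R.symm' hab))
    · exact h2 hab
    · exact Setoid.le_def.mp h1 hab

lemma wt_split {β : Type*} [Finite β] (Q : Setoid β) {C : Set β} (hC : C ∈ Q.classes) :
    wt Q = gfac C.ncard * ∏ᶠ C' ∈ Q.classes \ {C}, gfac C'.ncard := by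
  have hins : Q.classes = insert C (Q.classes \ {C}) := by
    rw [Set.insert_diff_singleton, Set.insert_eq_self.mpr hC]
  rw [wt]
  conv_lhs => rw [hins]
  exact finprod_mem_insert _ (fun h => h.2 rfl) (Set.toFinite _)

lemma innerFiberSum {β : Type*} [Finite β] (Q : Setoid β) (T : Set β) :
    ∑ᶠ R ∈ {R : Setoid (Option β) | projS R = Q ∧ DofS R ⊆ T}, wt R
      = wt Q * (1 - ∑ᶠ C ∈ {C ∈ Q.classes | C ⊆ T}, (C.ncard : ℤ)) := by
  have hstep : ∑ᶠ R ∈ {R : Setoid (Option β) | projS R = Q ∧ DofS R ⊆ T}, wt R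
      = ∑ᶠ D ∈ insert ∅ {C ∈ Q.classes | C ⊆ T},
          (gfac (D.ncard + 1) * ∏ᶠ C ∈ Q.classes \ {D}, gfac C.ncard) := by
    refine finsum_mem_eq_of_bijOn DofS ⟨?_, ?_, ?_⟩ ?_
    · rintro R ⟨hpr, hsub⟩
      rcases DofS_spec R with h | h
      · exact h ▸ Set.mem_insert _ _
      · exact Set.mem_insert_of_mem _ ⟨hpr ▸ h, hsub⟩
    · rintro R ⟨hpr, _⟩ R' ⟨hpr', _⟩ hDD
      exact setoid_option_ext (hpr.trans hpr'.symm) hDD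
    · rintro D (rfl | ⟨hD, hDT⟩)
      · refine ⟨optLift Q ∅ (Or.inl rfl), ⟨projS_optLift, ?_⟩, DofS_optLift⟩
        rw [DofS_optLift]
        exact Set.empty_subset T
      · refine ⟨optLift Q D (Or.inr hD), ⟨projS_optLift, ?_⟩, DofS_optLift⟩
        rw [DofS_optLift]
        exact hDT
    · rintro R ⟨hpr, _⟩
      conv_lhs => rw [← optLift_proj_Dof R]
      rw [wt_optLift]
      congr 2
      rw [hpr]
  rw [hstep, finsum_mem_insert _ (fun h => Setoid.empty_notMem_classes h.1) (Set.toFinite _)]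
  have h0 : gfac (Set.ncard (∅ : Set β) + 1) * ∏ᶠ C ∈ Q.classes \ {∅}, gfac C.ncard = wt Q := by
    rw [Set.ncard_empty, zero_add, gfac_one, one_mul,
      Set.diff_singleton_eq_self Setoid.empty_notMem_classes, wt]
  rw [h0]
  have hcongr : ∑ᶠ D ∈ {C ∈ Q.classes | C ⊆ T},
      (gfac (D.ncard + 1) * ∏ᶠ C ∈ Q.classes \ {D}, gfac C.ncard)
      = ∑ᶠ D ∈ {C ∈ Q.classes | C ⊆ T}, (-(D.ncard : ℤ)) * wt Q := by
    refine finsum_mem_congr rfl fun D hD => ?_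
    have hne : D.Nonempty := by
      rcases Set.eq_empty_or_nonempty D with rfl | h
      · exact absurd hD.1 Setoid.empty_notMem_classes
      · exact h
    have hcard : 1 ≤ D.ncard := (Set.ncard_pos (Set.toFinite D)).mpr hne
    rw [gfac_succ hcard, wt_split Q hD.1]
    ring
  rw [hcongr, finsum_mem_eq_finite_toFinset_sum _ (Set.toFinite _),
    finsum_mem_eq_finite_toFinset_sum _ (Set.toFinite _)]
  rw [mul_sub, mul_one, Finset.mul_sum, sub_eq_add_neg, ← Finset.sum_neg_distrib]
  congr 1
  refine Finset.sum_congr rfl fun D _ => by ring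

lemma K1 : ∀ (m : ℕ) (α : Type) [Finite α] (P : Setoid α), Nat.card α ≤ m →
    (∑ᶠ Q ∈ {Q : Setoid α | Q ≤ P}, wt Q) = if P = ⊥ then 1 else 0 := by
  have hbotcase : ∀ (α : Type) [Finite α], (∑ᶠ Q ∈ {Q : Setoid α | Q ≤ ⊥}, wt Q) = 1 := by
    intro α _
    have hset : {Q : Setoid α | Q ≤ ⊥} = {⊥} := by
      ext Q
      simp [le_bot_iff]
    rw [hset, finsum_mem_singleton, wt_bot]
  intro m
  induction m with
  | zero =>
    intro α _ P hcard
    have : IsEmpty α := by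
      rw [Nat.le_zero, Nat.card_eq_zero] at hcard
      rcases hcard with h | h
      · exact h
      · exact absurd (inferInstance : Finite α) h.not_finite
    have hPbot : P = ⊥ := Setoid.ext fun a _ => isEmptyElim a
    rw [if_pos hPbot, hPbot, hbotcase]
  | succ m ih =>
    intro α _ P hcard
    by_cases hP : P = ⊥
    · rw [if_pos hP, hP, hbotcase]
    · rw [if_neg hP]
      obtain ⟨t, u, htu, hrel⟩ := setoid_ne_bot_iff.mp hP
      set β := {x : α // x ≠ t} with hβdef
      haveI hbf : Fintype β := Fintype.ofFinite _
      haveI hobf : Finite (Setoid (Option β)) := setoidFinite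
      let e : Option β ≃ α := Equiv.optionSubtypeNe t
      have hcardβ : Nat.card β ≤ m := by
        have hF := Fintype.ofFinite β
        have h1 : Nat.card (Option β) = Nat.card α := Nat.card_congr e
        rw [Nat.card_eq_fintype_card (α := Option β), Fintype.card_option,
          ← Nat.card_eq_fintype_card] at h1
        omega
      rw [sum_wt_transport e P]
      set P₀ := Setoid.comap (⇑e) P with hP₀
      set Qs := projS P₀ with hQs
      set T := DofS P₀ with hTdef
      have hu' : (⟨u, Ne.symm htu⟩ : β) ∈ T := by
        show P (e (some ⟨u, Ne.symm htu⟩)) (e none)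
        exact P.symm' hrel
      have hT : T ∈ Qs.classes := by
        rcases DofS_spec P₀ with h | h
        · rw [← hTdef] at h
          exact absurd (h ▸ hu') (Set.notMem_empty _)
        · exact h
      have hdecomp : {R : Setoid (Option β) | R ≤ P₀} =
          ⋃ Q ∈ {Q : Setoid β | Q ≤ Qs}, {R | projS R = Q ∧ DofS R ⊆ T} := by
        ext R
        simp only [Set.mem_setOf_eq, Set.mem_iUnion, exists_prop]
        constructor
        · intro hR
          exact ⟨projS R, (le_iff_proj_Dof.mp hR).1, rfl, (le_iff_proj_Dof.mp hR).2⟩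
        · rintro ⟨Q, hQ, rfl, hsub⟩
          exact le_iff_proj_Dof.mpr ⟨hQ, hsub⟩
      have hdisjU : {Q : Setoid β | Q ≤ Qs}.PairwiseDisjoint
          (fun Q => {R : Setoid (Option β) | projS R = Q ∧ DofS R ⊆ T}) := by
        intro Q _ Q' _ hne
        rw [Function.onFun, Set.disjoint_left]
        rintro R ⟨h1, _⟩ ⟨h2, _⟩
        exact hne (h1 ▸ h2 ▸ rfl)
      rw [hdecomp, finsum_mem_biUnion hdisjU (Set.toFinite _) (fun Q _ => Set.toFinite {R : Setoid (Option β) | projS R = Q ∧ DofS R ⊆ T})]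
      have hinner : ∀ Q ∈ {Q : Setoid β | Q ≤ Qs},
          (∑ᶠ R ∈ {R : Setoid (Option β) | projS R = Q ∧ DofS R ⊆ T}, wt R)
            = wt Q * (1 - (T.ncard : ℤ)) := by
        intro Q hQ
        rw [innerFiberSum Q T, sum_ncard_classes_subset Q T ?_]
        intro C hC hCT
        obtain ⟨x, hxC, hxT⟩ := Set.nonempty_iff_ne_empty.mpr hCT
        intro y hyC
        exact class_sat hT hxT (Setoid.le_def.mp hQ (class_rel hC hxC hyC))
      rw [finsum_mem_congr rfl hinner]
      have hfactor : (∑ᶠ Q ∈ {Q : Setoid β | Q ≤ Qs}, wt Q * (1 - (T.ncard : ℤ)))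
          = (∑ᶠ Q ∈ {Q : Setoid β | Q ≤ Qs}, wt Q) * (1 - (T.ncard : ℤ)) := by
        rw [finsum_mem_eq_finite_toFinset_sum _ (Set.toFinite _),
          finsum_mem_eq_finite_toFinset_sum _ (Set.toFinite _), Finset.sum_mul]
      rw [hfactor, ih β Qs hcardβ]
      by_cases hQsbot : Qs = ⊥
      · rw [if_pos hQsbot, one_mul]
        have : T.ncard = 1 := ncard_class_bot (hQsbot ▸ hT)
        rw [this]
        ring
      · rw [if_neg hQsbot, zero_mul]
section Glue

lemma isEmbedded_iff {n : ℕ} (A : Set (Fin n)) (P : Setoid (Fin n)) :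
    IsEmbedded n (A, P) ↔ A = ∅ ∨ A ∈ P.classes := by
  constructor
  · intro h
    have h2 : P ⊔ modp n A = P := congrArg Prod.snd h
    have h1 : {y | ∃ a ∈ A, (P ⊔ modp n A) y a} = A := congrArg Prod.fst h
    rcases Set.eq_empty_or_nonempty A with rfl | ⟨a₀, ha₀⟩
    · exact Or.inl rfl
    · refine Or.inr ⟨a₀, ?_⟩
      have hmle : modp n A ≤ P := by
        conv_rhs => rw [← h2]
        exact le_sup_right
      ext x
      constructor
      · intro hx
        exact Setoid.le_def.mp hmle (Or.inr ⟨hx, ha₀⟩)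
      · intro hx
        rw [← h1]
        exact ⟨a₀, ha₀, Setoid.le_def.mp (le_sup_left : P ≤ P ⊔ modp n A) hx⟩
  · rintro (rfl | ⟨a₀, rfl⟩)
    · exact embedded_empty n P
    · have hmle : modp n {x | P x a₀} ≤ P := by
        rw [Setoid.le_def]
        rintro x y (rfl | ⟨hx, hy⟩)
        · exact P.refl' x
        · exact P.trans' hx (P.symm' hy)
      have hsup : P ⊔ modp n {x | P x a₀} = P := sup_eq_left.mpr hmle
      unfold IsEmbedded EmbClosure
      refine Prod.ext ?_ ?_
      · show {y | ∃ a ∈ {x | P x a₀}, (P ⊔ modp n {x | P x a₀}) y a} = {x | P x a₀}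
        rw [hsup]
        ext y
        constructor
        · rintro ⟨a, ha, hya⟩
          exact P.trans' hya ha
        · intro hy
          exact ⟨a₀, P.refl' a₀, hy⟩
      · exact hsup

/-- The canonical image of an embedded subset in the partition lattice of `Option (Fin n)`. -/
noncomputable def liftE {n : ℕ} (z : Emb n) : Setoid (Option (Fin n)) :=
  optLift z.val.2 z.val.1 ((isEmbedded_iff z.val.1 z.val.2).mp z.prop)

lemma liftE_le_iff {n : ℕ} {z x : Emb n} : liftE z ≤ liftE x ↔ z ≤ x := by
  rw [liftE, liftE, optLift_le_iff, ← Subtype.coe_le_coe, Prod.le_def]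
  exact and_comm

lemma liftE_injective {n : ℕ} : Function.Injective (liftE (n := n)) := by
  intro z x h
  have h1 : z.val.2 = x.val.2 := by
    have := congrArg projS h
    rwa [liftE, liftE, projS_optLift, projS_optLift] at this
  have h2 : z.val.1 = x.val.1 := by
    have := congrArg DofS h
    rwa [liftE, liftE, DofS_optLift, DofS_optLift] at this
  exact Subtype.ext (Prod.ext h2 h1)

lemma class_image {n : ℕ} {A : Set (Fin n)} {P : Setoid (Fin n)}
    (hA : A = ∅ ∨ A ∈ P.classes) (w : Fin n) (hw : w ∉ A) :
    Subtype.val '' {v : ↥(Aᶜ) | P v.val w} = {y | P y w} := by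
  ext y
  constructor
  · rintro ⟨v, hv, rfl⟩
    exact hv
  · intro hy
    have hyA : y ∉ A := by
      intro hyA
      rcases hA with rfl | hA
      · exact hyA
      · exact hw (class_sat hA hyA hy)
    exact ⟨⟨y, hyA⟩, hy, rfl⟩

lemma wt_liftE {n : ℕ} (z : Emb n) :
    wt (liftE z) = (-1) ^ z.val.1.ncard * (Nat.factorial z.val.1.ncard : ℤ) *
      ∏ᶠ B ∈ (indPart z.val.1ᶜ z.val.2).classes,
        (-1) ^ (B.ncard - 1) * (Nat.factorial (B.ncard - 1) : ℤ) := by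
  obtain ⟨⟨A, P⟩, hz⟩ := z
  have hA : A = ∅ ∨ A ∈ P.classes := (isEmbedded_iff A P).mp hz
  rw [liftE, wt_optLift]
  have hgf : gfac (A.ncard + 1) = (-1) ^ A.ncard * (Nat.factorial A.ncard : ℤ) := by
    rw [gfac]
    simp
  rw [show ((⟨(A, P), hz⟩ : Emb n).val.1 : Set (Fin n)) = A from rfl,
    show ((⟨(A, P), hz⟩ : Emb n).val.2 : Setoid (Fin n)) = P from rfl, hgf]
  congr 1
  refine (finprod_mem_eq_of_bijOn (fun s => Subtype.val '' s) ⟨?_, ?_, ?_⟩ fun B _ => ?_).symm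
  · rintro B ⟨w', rfl⟩
    have himg : Subtype.val '' {v : ↥(Aᶜ) | (indPart Aᶜ P) v w'} = {y | P y w'.val} :=
      class_image hA w'.val w'.prop
    constructor
    · show Subtype.val '' {v : ↥(Aᶜ) | (indPart Aᶜ P) v w'} ∈ P.classes
      rw [himg]
      exact P.mem_classes _
    · intro hEq
      have hEq' : Subtype.val '' {v : ↥(Aᶜ) | (indPart Aᶜ P) v w'} = A := hEq
      have hmem : (w' : Fin n) ∈ Subtype.val '' {v : ↥(Aᶜ) | (indPart Aᶜ P) v w'} :=
        ⟨w', (indPart Aᶜ P).refl' w', rfl⟩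
      rw [hEq'] at hmem
      exact w'.prop hmem
  · exact Set.injOn_of_injective (Set.image_injective.mpr Subtype.val_injective)
  · rintro C ⟨⟨w, rfl⟩, hCA⟩
    have hw : w ∉ A := by
      intro hwA
      rcases hA with rfl | hA
      · exact hwA
      · exact hCA (Set.mem_singleton_iff.mpr
          (Setoid.eq_of_mem_classes (P.mem_classes w) (P.refl' w) hA hwA))
    refine ⟨{v : ↥(Aᶜ) | (indPart Aᶜ P) v ⟨w, hw⟩}, (indPart Aᶜ P).mem_classes _, ?_⟩
    exact class_image hA w hw
  · rw [Set.ncard_image_of_injective _ Subtype.val_injective]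
    rfl

lemma botE_le {n : ℕ} (z : Emb n) : botE n ≤ z :=
  Subtype.coe_le_coe.mp ⟨Set.empty_subset _, bot_le⟩

lemma liftE_ne_bot {n : ℕ} {x : Emb n} (hx : x ≠ botE n) : liftE x ≠ ⊥ := by
  obtain ⟨⟨A, P⟩, hemb⟩ := x
  intro hbot
  rcases Set.eq_empty_or_nonempty A with rfl | ⟨a, ha⟩
  · have hP : P ≠ ⊥ := by
      intro hPbot
      exact hx (Subtype.ext (Prod.ext rfl hPbot))
    obtain ⟨t, u, htu, hrel⟩ := setoid_ne_bot_iff.mp hP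
    have hsome : liftE ⟨(∅, P), hemb⟩ (some t) (some u) := hrel
    rw [hbot] at hsome
    have : some t = some u := by simpa [Setoid.bot_def] using hsome
    exact htu (Option.some_injective _ this)
  · have hsome : liftE ⟨(A, P), hemb⟩ (some a) none := ha
    rw [hbot] at hsome
    have : some a = (none : Option (Fin n)) := by simpa [Setoid.bot_def] using hsome
    exact Option.some_ne_none _ this

lemma sum_wt_liftE_eq_zero {n : ℕ} (x : Emb n) (hx : x ≠ botE n) :
    ∑ᶠ z ∈ Set.Iic x, wt (liftE z) = 0 := by
  have hbij : Set.BijOn liftE (Set.Iic x) {R : Setoid (Option (Fin n)) | R ≤ liftE x} := by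
    refine ⟨fun z hz => liftE_le_iff.mpr hz, Set.injOn_of_injective liftE_injective, ?_⟩
    intro R hR
    refine ⟨⟨(DofS R, projS R), (isEmbedded_iff _ _).mpr (DofS_spec R)⟩, ?_, ?_⟩
    · have hEq : liftE ⟨(DofS R, projS R), (isEmbedded_iff _ _).mpr (DofS_spec R)⟩ = R :=
        optLift_proj_Dof R
      show _ ≤ x
      rw [← liftE_le_iff, hEq]
      exact hR
    · exact optLift_proj_Dof R
  rw [finsum_mem_eq_of_bijOn liftE hbij (fun z _ => rfl),
    K1 (Nat.card (Option (Fin n))) _ _ le_rfl, if_neg (liftE_ne_bot hx)]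

end Glue
theorem mobius_from_bottom (n : ℕ) (hn : 1 ≤ n) (A : Set (Fin n)) (P : Setoid (Fin n))
    (h : IsEmbedded n (A, P)) (mu : Emb n → Emb n → ℤ) (hmu : IsMobius mu) :
    mu (botE n) ⟨(A, P), h⟩ =
      (-1) ^ A.ncard * (Nat.factorial A.ncard : ℤ) *
        ∏ᶠ B ∈ (indPart Aᶜ P).classes,
          (-1) ^ (B.ncard - 1) * (Nat.factorial (B.ncard - 1) : ℤ) := by
  haveI : Finite (XN n) := inferInstance
  haveI : Finite (Emb n) := Subtype.finite
  have key : ∀ x : Emb n, mu (botE n) x = wt (liftE x) := by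
    intro x
    refine WellFoundedLT.induction (motive := fun y => mu (botE n) y = wt (liftE y)) x ?_
    intro x ih
    by_cases hx : x = botE n
    · subst hx
      have hone : wt (liftE (botE n)) = 1 := by
        rw [liftE, wt_optLift]
        rw [show ((botE n).val.1 : Set (Fin n)) = ∅ from rfl,
          show ((botE n).val.2 : Setoid (Fin n)) = ⊥ from rfl]
        rw [Set.ncard_empty, zero_add, gfac_one, one_mul,
          Set.diff_singleton_eq_self Setoid.empty_notMem_classes, ← wt, wt_bot]
      rw [hmu.1, hone]
    · have hlt : botE n < x := lt_of_le_of_ne (botE_le x) (Ne.symm hx)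
      rw [hmu.2.2 _ _ hlt]
      have hIco : ∑ᶠ z ∈ Set.Ico (botE n) x, mu (botE n) z
          = ∑ᶠ z ∈ Set.Ico (botE n) x, wt (liftE z) :=
        finsum_mem_congr rfl fun z hz => ih z hz.2
      rw [hIco]
      have hIic : Set.Iic x = insert x (Set.Ico (botE n) x) := by
        ext z
        simp only [Set.mem_Iic, Set.mem_insert_iff, Set.mem_Ico]
        constructor
        · intro hz
          rcases eq_or_lt_of_le hz with hEq | hlt2
          · exact Or.inl hEq
          · exact Or.inr ⟨botE_le z, hlt2⟩
        · rintro (rfl | ⟨_, h2⟩)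
          · exact le_rfl
          · exact le_of_lt h2
      have hzero := sum_wt_liftE_eq_zero x hx
      rw [hIic, finsum_mem_insert _ (fun hmem => lt_irrefl x hmem.2) (Set.toFinite _)] at hzero
      linarith [hzero]
  exact (key ⟨(A, P), h⟩).trans (wt_liftE ⟨(A, P), h⟩)
end
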